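/- arXiv:2512.19462 — 4 statements merged into one kernel-verified Lean document; each statement's English description precedes it below -/
import Mathlib

section
/- For all n ≥ 1 and 0 ≤ k ≤ n−1, the number of 132-avoiding permutations of length n with exactly k short values equals T_{n−1,k} = ((n−k)/n)·binomial(n−1+k, n−1); moreover there are no such permutations when k ≥ n. -/
open List

attribute [local instance] Classical.propDecidable

/-- `l` is a permutation of length `n`, i.e. a list containing each of `1,…,n` exactly once. -/
def IsPermList (n : ℕ) (l : List ℕ) : Prop :=
  l.Perm (List.range' 1 n)

/-- Two sequences (with distinct entries) are order-isomorphic: same length and the same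
pairwise order relations. -/
def OrderIsoList (a b : List ℕ) : Prop :=
  a.length = b.length ∧
    ∀ i j, i < j → j < a.length →
      (a.getD i 0 < a.getD j 0 ↔ b.getD i 0 < b.getD j 0)

/-- `l` contains the pattern `p`: some subsequence of `l` is order-isomorphic to `p`. -/
def ContainsPat (l p : List ℕ) : Prop :=
  ∃ s, s.Sublist l ∧ OrderIsoList s p

/-- `l` avoids the pattern `p`. -/
def AvoidsPat (l p : List ℕ) : Prop := ¬ ContainsPat l p

/-- Relabel the entries of a list of distinct naturals order-isomorphically with `1,…,m`. -/
def standardize (l : List ℕ) : List ℕ :=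
  l.map fun x => (l.filter fun y => y ≤ x).length

/-- Insert the new maximum value `l.length + 1` immediately after the first `i` entries. -/
def insertMax (l : List ℕ) (i : ℕ) : List ℕ :=
  l.take i ++ (l.length + 1) :: l.drop i

/-- The insertion step at position `i` for the pattern `p`: insert a new maximum after the
first `i` entries, keep the longest prefix avoiding `p` (i.e. remove the minimal suffix so
that the result avoids `p`), then standardize. -/
noncomputable def insStep (p l : List ℕ) (i : ℕ) : List ℕ :=
  standardize ((insertMax l i).take
    (Nat.findGreatest (fun k => AvoidsPat ((insertMax l i).take k) p)
      (insertMax l i).length))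

/-- The entry at (0-indexed) position `i` of `l` is a right-to-left maximum: it is larger
than every entry to its right. -/
def IsRLMax (l : List ℕ) (i : ℕ) : Prop :=
  ∀ j, i < j → j < l.length → l.getD j 0 < l.getD i 0

/-- The number of short values of `l`: entries that are not right-to-left maxima. -/
noncomputable def shortCount (l : List ℕ) : ℕ :=
  {i | i < l.length ∧ ¬ IsRLMax l i}.ncard

/-- `A132 n k` is the set of `132`-avoiding permutations of length `n` with exactly `k`
short values. -/
def A132 (n k : ℕ) : Set (List ℕ) :=
  {l | IsPermList n l ∧ AvoidsPat l [1, 3, 2] ∧ shortCount l = k}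

/- ### basic getD lemmas -/

lemma getD_mem (l : List ℕ) {i : ℕ} (h : i < l.length) : l.getD i 0 ∈ l := by
  rw [List.getD_eq_getElem l 0 h]; exact List.getElem_mem h

lemma getD_append_left' (A B : List ℕ) {i : ℕ} (h : i < A.length) :
    (A ++ B).getD i 0 = A.getD i 0 := List.getD_append A B 0 i h

lemma getD_append_offset (A B : List ℕ) (j : ℕ) :
    (A ++ B).getD (A.length + j) 0 = B.getD j 0 := by
  rw [List.getD_append_right A B 0 (A.length + j) (by omega)]
  congr 1; omega

/- ### 132 pattern characterization -/

lemma contains132_of_indices (l : List ℕ) {i j m : ℕ} (hij : i < j) (hjm : j < m)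
    (hm : m < l.length) (h1 : l.getD i 0 < l.getD m 0) (h2 : l.getD m 0 < l.getD j 0) :
    ContainsPat l [1, 3, 2] := by
  have hi : i < l.length := by omega
  have hj : j < l.length := by omega
  refine ⟨[l.getD i 0, l.getD j 0, l.getD m 0], ?_, ?_⟩
  · have hpw : List.Pairwise (· < ·) ([⟨i, hi⟩, ⟨j, hj⟩, ⟨m, hm⟩] : List (Fin l.length)) := by
      simp [List.pairwise_cons, Fin.mk_lt_mk, hij, hjm]
      omega
    have : List.map l.get [⟨i, hi⟩, ⟨j, hj⟩, ⟨m, hm⟩] <+ l := List.map_getElem_sublist hpw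
    simpa [List.getD_eq_getElem, hi, hj, hm, List.get_eq_getElem] using this
  · refine ⟨rfl, ?_⟩
    intro a b hab hb
    simp only [List.length_cons, List.length_nil] at hb
    have ha : a < 3 := by omega
    interval_cases b <;> interval_cases a <;>
      simp_all [List.getD_cons_succ, List.getD_cons_zero] <;> omega

lemma contains132_iff (l : List ℕ) (hl : l.Nodup) :
    ContainsPat l [1, 3, 2] ↔ ∃ i j m, i < j ∧ j < m ∧ m < l.length ∧
      l.getD i 0 < l.getD m 0 ∧ l.getD m 0 < l.getD j 0 := by
  constructor
  · rintro ⟨s, hs, hlen, hiso⟩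
    have hs3 : s.length = 3 := by simpa using hlen
    obtain ⟨is, hmap, hpw⟩ := List.sublist_eq_map_getElem hs
    have hislen : is.length = 3 := by
      rw [hmap] at hs3; simpa using hs3
    match is, hislen with
    | [a, b, c], _ =>
      have hab : (a:ℕ) < b := by
        have := (List.pairwise_iff_getElem.1 hpw) 0 1 (by simp) (by simp) (by omega)
        simpa using this
      have hbc : (b:ℕ) < c := by
        have := (List.pairwise_iff_getElem.1 hpw) 1 2 (by simp) (by simp) (by omega)
        simpa using this
      have hsval : s = [l.get a, l.get b, l.get c] := hmap
      have h01 := hiso 0 1 (by omega) (by omega)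
      have h12 := hiso 1 2 (by omega) (by omega)
      have h02 := hiso 0 2 (by omega) (by omega)
      rw [hsval] at h01 h12 h02
      simp only [List.getD_cons_zero, List.getD_cons_succ] at h01 h12 h02
      norm_num at h01 h12 h02
      -- h01 : l.get a < l.get b ; h02 : l.get a < l.get c ; h12 : ¬ (l.get b < l.get c)
      have hne : l.get b ≠ l.get c := by
        intro h
        have := List.nodup_iff_injective_get.1 hl h
        omega
      refine ⟨a, b, c, hab, hbc, c.isLt, ?_, ?_⟩
      · rw [List.getD_eq_getElem l 0 a.isLt, List.getD_eq_getElem l 0 c.isLt]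
        simpa [List.get_eq_getElem] using h02
      · rw [List.getD_eq_getElem l 0 b.isLt, List.getD_eq_getElem l 0 c.isLt]
        simp only [List.get_eq_getElem] at h12 hne
        omega
  · rintro ⟨i, j, m, hij, hjm, hm, h1, h2⟩
    exact contains132_of_indices l hij hjm hm h1 h2

lemma AvoidsPat.sublist {s l p : List ℕ} (hs : s <+ l) (h : AvoidsPat l p) :
    AvoidsPat s p := fun ⟨t, ht, hiso⟩ => h ⟨t, ht.trans hs, hiso⟩
/- ### shortCount machinery -/

noncomputable def shortF (l : List ℕ) : Finset ℕ :=
  (Finset.range l.length).filter (fun i => ¬ IsRLMax l i)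

lemma shortCount_eq_card (l : List ℕ) : shortCount l = (shortF l).card := by
  rw [shortCount, ← Set.ncard_coe_finset]
  congr 1
  ext i
  simp [shortF, Finset.mem_filter, Finset.mem_range]

lemma isRLMax_iff (l : List ℕ) (i : ℕ) (hi : i < l.length) :
    IsRLMax l i ↔ ∀ y ∈ l.drop (i+1), y < l.getD i 0 := by
  constructor
  · intro h y hy
    rw [List.mem_iff_getElem] at hy
    obtain ⟨j, hj, rfl⟩ := hy
    rw [List.getElem_drop]
    have hlen : i + 1 + j < l.length := by
      have := hj; rw [List.length_drop] at this; omega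
    have := h (i+1+j) (by omega) hlen
    rwa [List.getD_eq_getElem l 0 hlen] at this
  · intro h j hij hj
    have hmem : l[j] ∈ l.drop (i+1) := by
      rw [List.mem_iff_getElem]
      refine ⟨j - (i+1), by rw [List.length_drop]; omega, ?_⟩
      rw [List.getElem_drop]; congr 1; omega
    have := h _ hmem
    rwa [List.getD_eq_getElem l 0 hj]

lemma isRLMax_last (l : List ℕ) : IsRLMax l (l.length - 1) := by
  intro j h1 h2; omega

lemma isRLMax_cons_zero (a : ℕ) (l : List ℕ) :
    IsRLMax (a :: l) 0 ↔ ∀ y ∈ l, y < a := by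
  rw [isRLMax_iff _ 0 (by simp)]
  simp

lemma isRLMax_cons_succ (a : ℕ) (l : List ℕ) (i : ℕ) :
    IsRLMax (a :: l) (i+1) ↔ IsRLMax l i := by
  constructor
  · intro h j hij hj
    have := h (j+1) (by omega) (by simpa using Nat.succ_lt_succ hj)
    simpa [List.getD_cons_succ] using this
  · intro h j hij hj
    simp only [List.length_cons] at hj
    obtain ⟨j', rfl⟩ : ∃ j', j = j' + 1 := ⟨j - 1, by omega⟩
    simp only [List.getD_cons_succ]
    exact h j' (by omega) (by omega)

lemma isRLMax_append_right (A B : List ℕ) (j : ℕ) :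
    IsRLMax (A ++ B) (A.length + j) ↔ IsRLMax B j := by
  induction A with
  | nil => simp
  | cons a A ih =>
    have : (a :: A).length + j = (A.length + j) + 1 := by simp; omega
    rw [this, List.cons_append, isRLMax_cons_succ]
    exact ih

lemma shortCount_nil : shortCount [] = 0 := by
  rw [shortCount_eq_card]; simp [shortF]

lemma shortCount_cons (a : ℕ) (l : List ℕ) :
    shortCount (a :: l) = (if ∀ y ∈ l, y < a then 0 else 1) + shortCount l := by
  rw [shortCount_eq_card, shortCount_eq_card]
  have hset : shortF (a :: l) =
      (if ∀ y ∈ l, y < a then (∅ : Finset ℕ) else {0}) ∪ (shortF l).image (· + 1) := by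
    ext i
    by_cases h : ∀ y ∈ l, y < a
    · rw [if_pos h]
      cases i with
      | zero =>
        have h0 : IsRLMax (a :: l) 0 := (isRLMax_cons_zero a l).2 h
        simp [shortF, h0]
      | succ i => simp [shortF, isRLMax_cons_succ, Nat.succ_lt_succ_iff]
    · rw [if_neg h]
      cases i with
      | zero =>
        have h0 : ¬ IsRLMax (a :: l) 0 := fun hc => h ((isRLMax_cons_zero a l).1 hc)
        simp [shortF, h0]
      | succ i => simp [shortF, isRLMax_cons_succ, Nat.succ_lt_succ_iff]
  rw [hset, Finset.card_union_of_disjoint, Finset.card_image_of_injective _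
    (add_left_injective 1)]
  · by_cases h : ∀ y ∈ l, y < a
    · rw [if_pos h, if_pos h]; simp
    · rw [if_neg h, if_neg h]; simp
  · by_cases h : ∀ y ∈ l, y < a
    · rw [if_pos h]; simp
    · rw [if_neg h]; simp [Finset.disjoint_left]

lemma shortCount_append_perm (A t₁ t₂ : List ℕ) (hp : t₁.Perm t₂) :
    shortCount (A ++ t₁) + shortCount t₂ = shortCount (A ++ t₂) + shortCount t₁ := by
  induction A with
  | nil => simp [Nat.add_comm]
  | cons a A ih =>
    simp only [List.cons_append, shortCount_cons]
    have hiff : (∀ y ∈ A ++ t₁, y < a) ↔ (∀ y ∈ A ++ t₂, y < a) := by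
      constructor <;> intro h y hy <;> apply h <;>
        simp only [List.mem_append] at hy ⊢ <;>
        rcases hy with hy | hy <;> simp [hy, hp.mem_iff.2, hp.mem_iff.1, hp.symm.mem_iff.1]
    rw [if_congr hiff rfl rfl]
    omega

lemma shortCount_concat_lt (B : List ℕ) (x : ℕ) (hB : ∀ b ∈ B, b < x) :
    shortCount (B ++ [x]) = B.length := by
  induction B with
  | nil =>
    rw [List.nil_append, shortCount_cons]
    simp [shortCount_nil]
  | cons b B ih =>
    rw [List.cons_append, shortCount_cons]
    have hbx : b < x := hB b (by simp)
    have : ¬ ∀ y ∈ B ++ [x], y < b := by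
      intro h
      have := h x (by simp)
      omega
    rw [if_neg this, ih (fun c hc => hB c (by simp [hc]))]
    simp [Nat.add_comm]

lemma shortCount_concat_min (C : List ℕ) (y : ℕ) (h : ∀ c ∈ C, y < c) :
    shortCount (C ++ [y]) = shortCount C := by
  induction C with
  | nil =>
    rw [List.nil_append, shortCount_cons]
    simp [shortCount_nil]
  | cons c C ih =>
    rw [List.cons_append, shortCount_cons, shortCount_cons]
    have hyc : y < c := h c (by simp)
    have hiff : (∀ z ∈ C ++ [y], z < c) ↔ (∀ z ∈ C, z < c) := by
      constructor
      · intro hz z hzc; exact hz z (by simp [hzc])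
      · intro hz z hzc
        simp only [List.mem_append, List.mem_singleton] at hzc
        rcases hzc with hzc | rfl
        · exact hz z hzc
        · exact hyc
    rw [if_congr hiff rfl rfl, ih (fun c hc => h c (by simp [hc]))]

lemma shortCount_onlyLast (B : List ℕ) (hB : B ≠ [])
    (h : ∀ i, i < B.length - 1 → ¬ IsRLMax B i) : shortCount B = B.length - 1 := by
  rw [shortCount_eq_card]
  have : shortF B = Finset.range (B.length - 1) := by
    ext i
    simp only [shortF, Finset.mem_filter, Finset.mem_range]
    constructor
    · rintro ⟨h1, h2⟩
      by_contra hc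
      have : i = B.length - 1 := by omega
      exact h2 (this ▸ isRLMax_last B)
    · intro hi
      have hlen : 0 < B.length := List.length_pos_iff.2 hB
      exact ⟨by omega, h i hi⟩
  rw [this, Finset.card_range]

/- ### relabeling lemmas -/

lemma getD_map_eq (l : List ℕ) (f : ℕ → ℕ) {i : ℕ} (h : i < l.length) :
    (l.map f).getD i 0 = f (l.getD i 0) := by
  have h' : i < (l.map f).length := by simpa using h
  rw [List.getD_eq_getElem _ 0 h', List.getD_eq_getElem _ 0 h, List.getElem_map]

lemma nodup_map_of_mono (l : List ℕ) (f : ℕ → ℕ)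
    (hf : ∀ a ∈ l, ∀ b ∈ l, (a < b ↔ f a < f b)) (hl : l.Nodup) : (l.map f).Nodup := by
  apply hl.map_on
  intro x hx y hy hxy
  rcases lt_trichotomy x y with h | h | h
  · exact absurd ((hf x hx y hy).1 h) (by omega)
  · exact h
  · exact absurd ((hf y hy x hx).1 h) (by omega)

lemma isRLMax_map_iff (l : List ℕ) (f : ℕ → ℕ)
    (hf : ∀ a ∈ l, ∀ b ∈ l, (a < b ↔ f a < f b)) (i : ℕ) (hi : i < l.length) :
    IsRLMax (l.map f) i ↔ IsRLMax l i := by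
  have hi' : i < (l.map f).length := by simpa using hi
  rw [isRLMax_iff _ i hi', isRLMax_iff _ i hi, ← List.map_drop, getD_map_eq l f hi]
  constructor
  · intro h y hy
    have := h (f y) (List.mem_map_of_mem (f := f) hy)
    exact (hf y ((l.drop_sublist (i+1)).mem hy) _ (getD_mem l hi)).2 this
  · intro h y hy
    obtain ⟨z, hz, rfl⟩ := List.mem_map.1 hy
    exact (hf z ((l.drop_sublist (i+1)).mem hz) _ (getD_mem l hi)).1 (h z hz)

lemma shortCount_map_eq (l : List ℕ) (f : ℕ → ℕ)
    (hf : ∀ a ∈ l, ∀ b ∈ l, (a < b ↔ f a < f b)) :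
    shortCount (l.map f) = shortCount l := by
  rw [shortCount_eq_card, shortCount_eq_card]
  congr 1
  ext i
  simp only [shortF, Finset.mem_filter, Finset.mem_range, List.length_map]
  constructor
  · rintro ⟨h1, h2⟩
    exact ⟨h1, fun hc => h2 ((isRLMax_map_iff l f hf i h1).2 hc)⟩
  · rintro ⟨h1, h2⟩
    exact ⟨h1, fun hc => h2 ((isRLMax_map_iff l f hf i h1).1 hc)⟩

lemma avoids_map_iff (l : List ℕ) (f : ℕ → ℕ)
    (hf : ∀ a ∈ l, ∀ b ∈ l, (a < b ↔ f a < f b)) (hl : l.Nodup) :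
    AvoidsPat (l.map f) [1,3,2] ↔ AvoidsPat l [1,3,2] := by
  have hnd := nodup_map_of_mono l f hf hl
  rw [AvoidsPat, AvoidsPat, contains132_iff _ hnd, contains132_iff _ hl]
  simp only [List.length_map]
  constructor
  · intro h hc
    apply h
    obtain ⟨i, j, m, hij, hjm, hm, h1, h2⟩ := hc
    refine ⟨i, j, m, hij, hjm, hm, ?_, ?_⟩
    · rw [getD_map_eq l f (by omega), getD_map_eq l f hm]
      exact (hf _ (getD_mem l (by omega)) _ (getD_mem l hm)).1 h1
    · rw [getD_map_eq l f hm, getD_map_eq l f (show j < l.length by omega)]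
      exact (hf _ (getD_mem l hm) _ (getD_mem l (by omega))).1 h2
  · intro h hc
    apply h
    obtain ⟨i, j, m, hij, hjm, hm, h1, h2⟩ := hc
    rw [getD_map_eq l f (by omega), getD_map_eq l f hm] at h1
    rw [getD_map_eq l f hm, getD_map_eq l f (show j < l.length by omega)] at h2
    refine ⟨i, j, m, hij, hjm, hm, ?_, ?_⟩
    · exact (hf _ (getD_mem l (by omega)) _ (getD_mem l hm)).2 h1
    · exact (hf _ (getD_mem l hm) _ (getD_mem l (by omega))).2 h2

/- ### permutation facts -/

lemma IsPermList.len {n : ℕ} {l : List ℕ} (h : IsPermList n l) : l.length = n := by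
  have := List.Perm.length_eq h
  simpa using this

lemma IsPermList.nodup {n : ℕ} {l : List ℕ} (h : IsPermList n l) : l.Nodup :=
  h.nodup_iff.2 (List.nodup_range' (s := 1) (n := n))

lemma IsPermList.mem_iff' {n : ℕ} {l : List ℕ} (h : IsPermList n l) (y : ℕ) :
    y ∈ l ↔ 1 ≤ y ∧ y < 1 + n := by
  rw [h.mem_iff, List.mem_range'_1]

lemma A132_finite (n k : ℕ) : (A132 n k).Finite := by
  apply Set.Finite.subset (List.finite_toSet ((List.range' 1 n).permutations))
  intro l hl
  exact List.mem_permutations.2 hl.1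

lemma A132_subset_empty (n k : ℕ) (hn : 1 ≤ n) (hk : n ≤ k) : A132 n k = ∅ := by
  ext l
  simp only [A132, Set.mem_setOf_eq, Set.mem_empty_iff_false, iff_false]
  rintro ⟨hperm, _, hsc⟩
  have hlen : l.length = n := hperm.len
  have : shortF l ⊆ Finset.range (n - 1) := by
    intro i hi
    simp only [shortF, Finset.mem_filter, Finset.mem_range, hlen] at hi
    simp only [Finset.mem_range]
    rcases hi with ⟨h1, h2⟩
    by_contra hc
    have : i = n - 1 := by omega
    subst this
    exact h2 (by rw [← hlen]; exact isRLMax_last l)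
  have := Finset.card_le_card this
  rw [← shortCount_eq_card, Finset.card_range, hsc] at this
  omega

/- ### maximum element lemma -/

lemma exists_rlmax_max (B : List ℕ) (h : B ≠ []) :
    ∃ j, j < B.length ∧ IsRLMax B j ∧ ∀ y ∈ B, y ≤ B.getD j 0 := by
  induction B with
  | nil => exact absurd rfl h
  | cons a t ih =>
    rcases eq_or_ne t [] with rfl | ht
    · refine ⟨0, by simp, ?_, by simp⟩
      intro j h1 h2
      simp at h2
      omega
    · obtain ⟨j, hj, hrl, hmax⟩ := ih ht
      by_cases hc : t.getD j 0 < a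
      · refine ⟨0, by simp, (isRLMax_cons_zero a t).2 ?_, ?_⟩
        · intro y hy
          exact lt_of_le_of_lt (hmax y hy) hc
        · intro y hy
          simp only [List.getD_cons_zero]
          rcases List.mem_cons.1 hy with rfl | hy
          · exact le_refl _
          · exact le_of_lt (lt_of_le_of_lt (hmax y hy) hc)
      · refine ⟨j + 1, by simp; omega, (isRLMax_cons_succ a t j).2 hrl, ?_⟩
        intro y hy
        simp only [List.getD_cons_succ]
        rcases List.mem_cons.1 hy with rfl | hy
        · omega
        · exact hmax y hy

/- ### the splitting relation -/

def SplitRel (l l' : List ℕ) : Prop :=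
  ∃ A x B, l = A ++ x :: B ∧ l' = A ++ B ++ [x] ∧ B ≠ [] ∧
    (∀ b ∈ B, b < x) ∧ (∀ a ∈ A, ∀ b ∈ B, b < a) ∧
    (∀ i, i < B.length - 1 → ¬ IsRLMax B i)

lemma containsPat_sublist {s l p : List ℕ} (h : ContainsPat s p) (hs : s <+ l) :
    ContainsPat l p := by
  obtain ⟨t, ht, hiso⟩ := h
  exact ⟨t, ht.trans hs, hiso⟩

lemma SplitRel.perm' {l l' : List ℕ} (h : SplitRel l l') : l.Perm l' := by
  obtain ⟨A, x, B, rfl, rfl, _⟩ := h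
  rw [List.append_assoc]
  exact List.Perm.append_left A (List.perm_append_singleton x B).symm

lemma SplitRel.shortCount_eq {l l' : List ℕ} (h : SplitRel l l') :
    shortCount l' = shortCount l + 1 := by
  obtain ⟨A, x, B, rfl, rfl, hBne, hBx, hAB, hBint⟩ := h
  have key := shortCount_append_perm A (x :: B) (B ++ [x]) (List.perm_append_singleton x B).symm
  have h1 : shortCount (B ++ [x]) = B.length := shortCount_concat_lt B x hBx
  have h2 : shortCount (x :: B) = B.length - 1 := by
    rw [shortCount_cons, if_pos hBx, shortCount_onlyLast B hBne hBint]
    omega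
  have hBlen : 1 ≤ B.length := List.length_pos_iff.2 hBne
  rw [List.append_assoc]
  omega

lemma SplitRel.getD_last {l l' : List ℕ} (h : SplitRel l l') (hmem : ∀ y ∈ l, 1 ≤ y) :
    l'.getD (l'.length - 1) 0 ≠ 1 := by
  obtain ⟨A, x, B, rfl, rfl, hBne, hBx, hAB, hBint⟩ := h
  obtain ⟨b, hb⟩ := List.exists_mem_of_ne_nil B hBne
  have hb1 : 1 ≤ b := hmem b (by simp [hb])
  have hbx : b < x := hBx b hb
  have hlen : (A ++ B ++ [x]).length - 1 = (A ++ B).length + 0 := by simp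
  rw [hlen, getD_append_offset]
  simp
  omega

/- getD computations shared by the avoidance lemmas -/

section SplitAvoid

variable (A B : List ℕ) (x : ℕ)

lemma getD_split1_left {t : ℕ} (h : t < A.length) :
    (A ++ x :: B).getD t 0 = A.getD t 0 := getD_append_left' A _ h

lemma getD_split1_mid (j : ℕ) :
    (A ++ x :: B).getD (A.length + j) 0 = (x :: B).getD j 0 := getD_append_offset A _ j

lemma getD_split2_left {t : ℕ} (h : t < A.length) :
    (A ++ B ++ [x]).getD t 0 = A.getD t 0 := by
  rw [List.append_assoc]
  exact getD_append_left' A _ h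

lemma getD_split2_mid (j : ℕ) :
    (A ++ B ++ [x]).getD (A.length + j) 0 = (B ++ [x]).getD j 0 := by
  rw [List.append_assoc]
  exact getD_append_offset A _ j

lemma getD_split2_last :
    (A ++ B ++ [x]).getD (A.length + B.length) 0 = x := by
  have h := getD_append_offset (A ++ B) [x] 0
  simp only [List.length_append, Nat.add_zero] at h
  simpa using h

end SplitAvoid

lemma SplitRel.avoid_mp {l l' : List ℕ} (h : SplitRel l l') (hnd : l.Nodup)
    (ha : AvoidsPat l [1,3,2]) : AvoidsPat l' [1,3,2] := by
  obtain ⟨A, x, B, rfl, rfl, hBne, hBx, hAB, hBint⟩ := h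
  have hnd' : (A ++ B ++ [x]).Nodup := (SplitRel.perm' ⟨A, x, B, rfl, rfl, hBne, hBx, hAB, hBint⟩).nodup_iff.1 hnd
  rw [AvoidsPat, contains132_iff _ hnd']
  rw [AvoidsPat, contains132_iff _ hnd] at ha
  rintro ⟨i, j, m, hij, hjm, hm, h1, h2⟩
  apply ha
  have hlen' : (A ++ B ++ [x]).length = A.length + B.length + 1 := by simp; omega
  rw [hlen'] at hm
  have hlen : (A ++ x :: B).length = A.length + B.length + 1 := by simp; omega
  -- value of l' at index t
  have hval : ∀ t, t < A.length + B.length →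
      (A ++ x :: B).getD (if t < A.length then t else t + 1) 0 = (A ++ B ++ [x]).getD t 0 := by
    intro t ht
    by_cases hta : t < A.length
    · rw [if_pos hta, getD_split1_left A B x hta, getD_split2_left A B x hta]
    · rw [if_neg hta]
      have h1 : t + 1 = A.length + (1 + (t - A.length)) := by omega
      have h2 : t = A.length + (t - A.length) := by omega
      rw [h1, getD_split1_mid A B x]
      conv_rhs => rw [h2, getD_split2_mid A B x]
      have h3 : (1 + (t - A.length)) = (t - A.length) + 1 := by omega
      rw [h3, List.getD_cons_succ]
      rw [getD_append_left' B [x] (by omega)]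
  rcases Nat.lt_or_ge m (A.length + B.length) with hmlt | hmge
  · -- all three in A ++ B part
    refine ⟨if i < A.length then i else i + 1, if j < A.length then j else j + 1,
      if m < A.length then m else m + 1, ?_, ?_, ?_, ?_, ?_⟩
    · split_ifs <;> omega
    · split_ifs <;> omega
    · rw [hlen]; split_ifs <;> omega
    · rw [hval i (by omega), hval m (by omega)]; exact h1
    · rw [hval m (by omega), hval j (by omega)]; exact h2
  · -- m is the last position, value x
    have hmeq : m = A.length + B.length := by omega
    have hmx : (A ++ B ++ [x]).getD m 0 = x := by rw [hmeq]; exact getD_split2_last A B x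
    rw [hmx] at h1 h2
    have hjA : j < A.length := by
      by_contra hc
      push_neg at hc
      have hj2 : j = A.length + (j - A.length) := by omega
      rw [hj2, getD_split2_mid A B x] at h2
      rw [getD_append_left' B [x] (by omega)] at h2
      have : (B.getD (j - A.length) 0) ∈ B := getD_mem B (by omega)
      have := hBx _ this
      omega
    refine ⟨i, j, A.length, hij, hjA, by rw [hlen]; omega, ?_, ?_⟩
    · rw [getD_split1_left A B x (by omega), ← getD_split2_left A B x (show i < A.length by omega)]
      have hx1 : (A ++ x :: B).getD (A.length + 0) 0 = x := by
        rw [getD_split1_mid A B x]; simp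
      simp only [Nat.add_zero] at hx1
      rw [hx1]; exact h1
    · rw [getD_split1_left A B x hjA, ← getD_split2_left A B x hjA]
      have hx1 : (A ++ x :: B).getD (A.length + 0) 0 = x := by
        rw [getD_split1_mid A B x]; simp
      simp only [Nat.add_zero] at hx1
      rw [hx1]; exact h2

lemma SplitRel.avoid_mpr {l l' : List ℕ} (h : SplitRel l l') (hnd : l.Nodup)
    (ha : AvoidsPat l' [1,3,2]) : AvoidsPat l [1,3,2] := by
  obtain ⟨A, x, B, rfl, rfl, hBne, hBx, hAB, hBint⟩ := h
  have hnd' : (A ++ B ++ [x]).Nodup := (SplitRel.perm' ⟨A, x, B, rfl, rfl, hBne, hBx, hAB, hBint⟩).nodup_iff.1 hnd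
  rw [AvoidsPat, contains132_iff _ hnd'] at ha
  rw [AvoidsPat, contains132_iff _ hnd]
  rintro ⟨i, j, m, hij, hjm, hm, h1, h2⟩
  apply ha
  have hlen : (A ++ x :: B).length = A.length + B.length + 1 := by simp; omega
  rw [hlen] at hm
  have hlen' : (A ++ B ++ [x]).length = A.length + B.length + 1 := by simp; omega
  have hx1 : (A ++ x :: B).getD A.length 0 = x := by
    have := getD_split1_mid A B x 0
    simpa using this
  -- value transfer for t ≠ |A|
  have hval : ∀ t, t < A.length + B.length + 1 → t ≠ A.length →
      (A ++ B ++ [x]).getD (if t < A.length then t else t - 1) 0 = (A ++ x :: B).getD t 0 := by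
    intro t ht htne
    by_cases hta : t < A.length
    · rw [if_pos hta, getD_split1_left A B x hta, getD_split2_left A B x hta]
    · rw [if_neg hta]
      have h2' : t = A.length + (1 + (t - A.length - 1)) := by omega
      have h3' : t - 1 = A.length + (t - A.length - 1) := by omega
      conv_rhs => rw [h2', getD_split1_mid A B x]
      rw [h3', getD_split2_mid A B x]
      have h4 : (1 + (t - A.length - 1)) = (t - A.length - 1) + 1 := by omega
      rw [h4, List.getD_cons_succ]
      rw [getD_append_left' B [x] (by omega)]
  by_cases hiA : i = A.length
  · -- x is the smallest element of the pattern: impossible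
    exfalso
    subst hiA
    rw [hx1] at h1
    have hm2 : m = A.length + (1 + (m - A.length - 1)) := by omega
    rw [hm2, getD_split1_mid A B x] at h1
    have h4 : (1 + (m - A.length - 1)) = (m - A.length - 1) + 1 := by omega
    rw [h4, List.getD_cons_succ] at h1
    have : B.getD (m - A.length - 1) 0 ∈ B := getD_mem B (by omega)
    have := hBx _ this
    omega
  by_cases hjA : j = A.length
  ·
    -- x is the "3"; then i in A, m in B, contradiction with hAB
    exfalso
    subst hjA
    have hiA' : i < A.length := hij
    rw [hx1] at h2
    have hm2 : m = A.length + (1 + (m - A.length - 1)) := by omega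
    rw [hm2, getD_split1_mid A B x] at h1
    have h4 : (1 + (m - A.length - 1)) = (m - A.length - 1) + 1 := by omega
    rw [h4, List.getD_cons_succ] at h1
    rw [getD_split1_left A B x hiA'] at h1
    have hmemB : B.getD (m - A.length - 1) 0 ∈ B := getD_mem B (by omega)
    have hmemA : A.getD i 0 ∈ A := getD_mem A hiA'
    have := hAB _ hmemA _ hmemB
    omega
  by_cases hmA : m = A.length
  · -- x is the middle value: move it to the end
    subst hmA
    rw [hx1] at h1 h2
    have hiA' : i < A.length := by omega
    have hjA' : j < A.length := by omega
    refine ⟨i, j, A.length + B.length, hij, by omega, by rw [hlen']; omega, ?_, ?_⟩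
    · rw [getD_split2_last A B x, getD_split2_left A B x hiA',
        ← getD_split1_left A B x hiA']
      exact h1
    · rw [getD_split2_last A B x, getD_split2_left A B x hjA',
        ← getD_split1_left A B x hjA']
      exact h2
  · -- none is x
    refine ⟨if i < A.length then i else i - 1, if j < A.length then j else j - 1,
      if m < A.length then m else m - 1, ?_, ?_, ?_, ?_, ?_⟩
    · split_ifs <;> omega
    · split_ifs <;> omega
    · rw [hlen']; split_ifs <;> omega
    · rw [hval i (by omega) hiA, hval m (by omega) hmA]; exact h1
    · rw [hval m (by omega) hmA, hval j (by omega) hjA]; exact h2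

/- ### uniqueness of splits -/

lemma splitRel_not_lt {l A₁ B₁ A₂ B₂ : List ℕ} {x₁ x₂ : ℕ}
    (e₁ : l = A₁ ++ x₁ :: B₁) (e₂ : l = A₂ ++ x₂ :: B₂)
    (hB₁ : B₁ ≠ []) (hB₂ : B₂ ≠ [])
    (hBx₂ : ∀ b ∈ B₂, b < x₂)
    (hBint₁ : ∀ i, i < B₁.length - 1 → ¬ IsRLMax B₁ i) :
    ¬ (A₁.length < A₂.length) := by
  intro hlt
  set p₁ := A₁.length
  set p₂ := A₂.length
  have hlen₁ : l.length = p₁ + B₁.length + 1 := by rw [e₁]; simp; omega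
  have hlen₂ : l.length = p₂ + B₂.length + 1 := by rw [e₂]; simp; omega
  have hB₂len : 1 ≤ B₂.length := List.length_pos_iff.2 hB₂
  -- x₂ is an RL max of l at position p₂
  have hrl₂ : IsRLMax l p₂ := by
    rw [isRLMax_iff l p₂ (by omega)]
    have hdrop : l.drop (p₂ + 1) = B₂ := by
      rw [e₂, show p₂ + 1 = A₂.length + 1 from rfl, List.drop_append]
      simp
    have hget : l.getD p₂ 0 = x₂ := by
      rw [e₂]
      have := getD_append_offset A₂ (x₂ :: B₂) 0
      rw [Nat.add_zero, List.getD_cons_zero] at this; exact this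
    rw [hdrop, hget]
    exact hBx₂
  -- translate into B₁
  have heq : p₂ = p₁ + (1 + (p₂ - p₁ - 1)) := by omega
  rw [e₁] at hrl₂
  rw [heq] at hrl₂
  rw [isRLMax_append_right A₁ (x₁ :: B₁) _] at hrl₂
  rw [show (1 + (p₂ - p₁ - 1)) = (p₂ - p₁ - 1) + 1 by omega, isRLMax_cons_succ] at hrl₂
  exact hBint₁ (p₂ - p₁ - 1) (by omega) hrl₂

lemma splitRel_right_unique {l l₁ l₂ : List ℕ} (h₁ : SplitRel l l₁) (h₂ : SplitRel l l₂) :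
    l₁ = l₂ := by
  obtain ⟨A₁, x₁, B₁, e₁, f₁, hBne₁, hBx₁, hAB₁, hBint₁⟩ := h₁
  obtain ⟨A₂, x₂, B₂, e₂, f₂, hBne₂, hBx₂, hAB₂, hBint₂⟩ := h₂
  have hp : A₁.length = A₂.length := by
    rcases lt_trichotomy A₁.length A₂.length with h | h | h
    · exact absurd h (splitRel_not_lt e₁ e₂ hBne₁ hBne₂ hBx₂ hBint₁)
    · exact h
    · exact absurd h (splitRel_not_lt e₂ e₁ hBne₂ hBne₁ hBx₁ hBint₂)
  have hA : A₁ = A₂ := by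
    have t₁ : A₁ = l.take A₁.length := by rw [e₁, List.take_left]
    have t₂ : A₂ = l.take A₂.length := by rw [e₂, List.take_left]
    rw [t₁, t₂, hp]
  have hxB : x₁ :: B₁ = x₂ :: B₂ := by
    have d₁ : x₁ :: B₁ = l.drop A₁.length := by
      rw [e₁, ← Nat.add_zero A₁.length, List.drop_append]
      simp
    have d₂ : x₂ :: B₂ = l.drop A₂.length := by
      rw [e₂, ← Nat.add_zero A₂.length, List.drop_append]
      simp
    rw [d₁, d₂, hp]
  obtain ⟨hx, hB⟩ : x₁ = x₂ ∧ B₁ = B₂ := by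
    have := List.cons.injEq x₁ B₁ x₂ B₂ ▸ hxB
    constructor
    · exact List.head_eq_of_cons_eq hxB
    · exact List.tail_eq_of_cons_eq hxB
  rw [f₁, f₂, hA, hx, hB]

lemma splitRel_left_not_lt {l' A₁ B₁ A₂ B₂ : List ℕ} {x₁ x₂ : ℕ}
    (f₁ : l' = A₁ ++ B₁ ++ [x₁]) (f₂ : l' = A₂ ++ B₂ ++ [x₂])
    (hB₁ : B₁ ≠ []) (hB₂ : B₂ ≠ [])
    (hAB₁ : ∀ a ∈ A₁, ∀ b ∈ B₁, b < a)
    (hBint₂ : ∀ i, i < B₂.length - 1 → ¬ IsRLMax B₂ i) :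
    ¬ (B₁.length < B₂.length) := by
  intro hlt
  have hC : A₁ ++ B₁ = A₂ ++ B₂ := by
    have : (A₁ ++ B₁ ++ [x₁]).dropLast = (A₂ ++ B₂ ++ [x₂]).dropLast := by
      rw [← f₁, ← f₂]
    rwa [List.dropLast_concat, List.dropLast_concat] at this
  set C := A₁ ++ B₁ with hCdef
  have hClen : C.length = A₁.length + B₁.length := by simp [hCdef]
  have hClen₂ : C.length = A₂.length + B₂.length := by rw [hC]; simp
  have hB₁len : 1 ≤ B₁.length := List.length_pos_iff.2 hB₁
  have hA₁pos : A₂.length < A₁.length := by omega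
  -- the last element a of A₁, sitting inside B₂
  set ia := A₁.length - 1
  have hia : ia < A₁.length := by omega
  have ha_val : C.getD ia 0 = A₁.getD ia 0 := getD_append_left' A₁ B₁ hia
  have haA : A₁.getD ia 0 ∈ A₁ := getD_mem A₁ hia
  set j := ia - A₂.length with hjdef
  have hj2 : A₂.length + j = ia := by omega
  have hjB₂ : j < B₂.length - 1 := by omega
  have ha_val₂ : C.getD ia 0 = B₂.getD j 0 := by
    rw [hC, ← hj2]
    exact getD_append_offset A₂ B₂ j
  -- B₂ has no RL max at j
  have hnot := hBint₂ j hjB₂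
  rw [isRLMax_iff B₂ j (by omega)] at hnot
  push_neg at hnot
  obtain ⟨y, hy, hya⟩ := hnot
  -- y is in B₁
  have hyB₁ : y ∈ B₁ := by
    have hdrop : B₂.drop (j + 1) = C.drop (A₁.length) := by
      rw [hC, show A₁.length = A₂.length + (j+1) by omega, List.drop_append]
      simp
    have hdrop₁ : C.drop A₁.length = B₁ := by
      rw [hCdef, ← Nat.add_zero A₁.length, List.drop_append]
      simp
    rw [hdrop, hdrop₁] at hy
    exact hy
  have := hAB₁ _ haA y hyB₁
  rw [← ha_val, ha_val₂] at this
  omega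

lemma splitRel_left_unique {l₁ l₂ l' : List ℕ} (h₁ : SplitRel l₁ l') (h₂ : SplitRel l₂ l') :
    l₁ = l₂ := by
  obtain ⟨A₁, x₁, B₁, e₁, f₁, hBne₁, hBx₁, hAB₁, hBint₁⟩ := h₁
  obtain ⟨A₂, x₂, B₂, e₂, f₂, hBne₂, hBx₂, hAB₂, hBint₂⟩ := h₂
  have hC : A₁ ++ B₁ = A₂ ++ B₂ := by
    have : (A₁ ++ B₁ ++ [x₁]).dropLast = (A₂ ++ B₂ ++ [x₂]).dropLast := by
      rw [← f₁, ← f₂]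
    rwa [List.dropLast_concat, List.dropLast_concat] at this
  have hx : x₁ = x₂ := by
    have h1 : l'.getD (A₁.length + B₁.length) 0 = x₁ := by
      rw [f₁]; exact getD_split2_last A₁ B₁ x₁
    have h2 : l'.getD (A₂.length + B₂.length) 0 = x₂ := by
      rw [f₂]; exact getD_split2_last A₂ B₂ x₂
    have hlen : A₁.length + B₁.length = A₂.length + B₂.length := by
      have := congrArg List.length hC
      simpa using this
    rw [← h1, ← h2, hlen]
  have hB : B₁.length = B₂.length := by
    rcases lt_trichotomy B₁.length B₂.length with h | h | h
    · exact absurd h (splitRel_left_not_lt f₁ f₂ hBne₁ hBne₂ hAB₁ hBint₂)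
    · exact h
    · exact absurd h (splitRel_left_not_lt f₂ f₁ hBne₂ hBne₁ hAB₂ hBint₁)
  have hAlen : A₁.length = A₂.length := by
    have := congrArg List.length hC
    simp at this
    omega
  have hA : A₁ = A₂ := by
    have t₁ : A₁ = (A₁ ++ B₁).take A₁.length := by rw [List.take_left]
    have t₂ : A₂ = (A₂ ++ B₂).take A₂.length := by rw [List.take_left]
    rw [t₁, t₂, ← hC, hAlen]
  have hBeq : B₁ = B₂ := by
    have d₁ : B₁ = (A₁ ++ B₁).drop A₁.length := by
      rw [← Nat.add_zero A₁.length, List.drop_append]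
      simp
    have d₂ : B₂ = (A₂ ++ B₂).drop A₂.length := by
      rw [← Nat.add_zero A₂.length, List.drop_append]
      simp
    rw [d₁, d₂, ← hC, hAlen]
  rw [e₁, e₂, hA, hx, hBeq]

/- ### existence of splits -/

lemma exists_nonlast_rlmax {n k : ℕ} {l : List ℕ} (hl : l ∈ A132 n k) (hk : k + 2 ≤ n) :
    ∃ i, i < l.length - 1 ∧ IsRLMax l i := by
  obtain ⟨hperm, _, hsc⟩ := hl
  have hlen : l.length = n := hperm.len
  have hsub : shortF l ⊆ Finset.range l.length := Finset.filter_subset _ _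
  have hshort : (shortF l).card = k := by rw [← shortCount_eq_card l]; exact hsc
  have hcard : (Finset.range l.length \ shortF l).card = l.length - k := by
    rw [Finset.card_sdiff_of_subset hsub, Finset.card_range, hshort]
  have hbig : 1 < (Finset.range l.length \ shortF l).card := by omega
  obtain ⟨i, hi, hne⟩ := Finset.exists_mem_ne hbig (l.length - 1)
  rw [Finset.mem_sdiff] at hi
  obtain ⟨hir, hins⟩ := hi
  rw [Finset.mem_range] at hir
  have hrl : IsRLMax l i := by
    by_contra hc
    exact hins (by simp [shortF, Finset.mem_filter, Finset.mem_range, hir, hc])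
  exact ⟨i, by omega, hrl⟩

lemma split_forward {n k : ℕ} {l : List ℕ} (hl : l ∈ A132 n k)
    (hex : ∃ i, i < l.length - 1 ∧ IsRLMax l i) : ∃ l', SplitRel l l' := by
  obtain ⟨i0, hi0, hrl0⟩ := hex
  set P : ℕ → Prop := fun i => i < l.length - 1 ∧ IsRLMax l i with hP
  set p := Nat.findGreatest P l.length with hpdef
  have hp : P p := Nat.findGreatest_spec (le_of_lt (by omega)) ⟨hi0, hrl0⟩
  obtain ⟨hp1, hp2⟩ := hp
  have hplen : p < l.length := by omega
  set A := l.take p with hA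
  set x := l.getD p 0 with hx
  set B := l.drop (p+1) with hB
  have hdropp : l.drop p = x :: B := by
    rw [hB, hx, List.drop_eq_getElem_cons hplen, List.getD_eq_getElem l 0 hplen]
  have hsplit : l = A ++ x :: B := by
    conv_lhs => rw [← List.take_append_drop p l]
    rw [hdropp]
  have hAlen : A.length = p := by rw [hA, List.length_take]; omega
  have hBlen : B.length = l.length - (p+1) := by rw [hB, List.length_drop]
  have hBne : B ≠ [] := List.ne_nil_of_length_pos (by omega)
  have hBx : ∀ b ∈ B, b < x := by
    rw [isRLMax_iff l p hplen] at hp2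
    intro b hb
    exact hp2 b (by rw [hB] at hb; exact hb)
  have hnd : l.Nodup := hl.1.nodup
  have hAB : ∀ a ∈ A, ∀ b ∈ B, b < a := by
    intro a ha b hb
    by_contra hc
    push_neg at hc
    have hanb : a ≠ b := by
      have hnd2 := hsplit ▸ hnd
      rw [List.nodup_append] at hnd2
      intro heq
      exact hnd2.2.2 a ha b (List.mem_cons_of_mem x hb) heq
    have hab : a < b := by omega
    -- indices
    obtain ⟨ia, hia, haeq⟩ := List.mem_iff_getElem.1 ha
    obtain ⟨jb, hjb, hbeq⟩ := List.mem_iff_getElem.1 hb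
    have hvala : l.getD ia 0 = a := by
      rw [hsplit, getD_split1_left A B x hia, List.getD_eq_getElem A 0 hia, haeq]
    have hvalb : l.getD (p + 1 + jb) 0 = b := by
      rw [hsplit, show p + 1 + jb = A.length + (1 + jb) by omega, getD_split1_mid A B x,
        show 1 + jb = jb + 1 by omega, List.getD_cons_succ,
        List.getD_eq_getElem B 0 hjb, hbeq]
    have hvalx : l.getD p 0 = x := rfl
    have hcont : ContainsPat l [1,3,2] := by
      apply contains132_of_indices l (i := ia) (j := p) (m := p + 1 + jb)
        (by omega) (by omega) (by omega)
      · rw [hvala, hvalb]; exact hab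
      · rw [hvalb, hvalx]; exact hBx b hb
    exact hl.2.1 hcont
  have hBint : ∀ i, i < B.length - 1 → ¬ IsRLMax B i := by
    intro i hi hrl
    have hineq : p < p + 1 + i := by omega
    have hle : p + 1 + i ≤ l.length := by omega
    apply Nat.findGreatest_is_greatest (k := p + 1 + i) (by rw [← hpdef]; omega) hle
    refine ⟨by omega, ?_⟩
    rw [hsplit, show p + 1 + i = A.length + (1 + i) by omega,
      isRLMax_append_right A (x :: B) (1 + i),
      show 1 + i = i + 1 by omega, isRLMax_cons_succ]
    exact hrl
  exact ⟨A ++ B ++ [x], A, x, B, hsplit, rfl, hBne, hBx, hAB, hBint⟩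

lemma split_backward {n k : ℕ} {l' : List ℕ} (hl' : l' ∈ A132 n k) (hn : 1 ≤ n)
    (h1 : l'.getD (l'.length - 1) 0 ≠ 1) : ∃ l, SplitRel l l' := by
  obtain ⟨hperm, hav, hsc⟩ := hl'
  have hlen : l'.length = n := hperm.len
  have hl'ne : l' ≠ [] := List.ne_nil_of_length_pos (by omega)
  set x := l'.getD (l'.length - 1) 0 with hxdef
  set C := l'.dropLast with hCdef
  have hxlast : l'.getLast hl'ne = x := by
    rw [List.getLast_eq_getElem, hxdef, List.getD_eq_getElem l' 0 (by omega)]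
  have hCx : C ++ [x] = l' := by
    rw [hCdef, ← hxlast, List.dropLast_append_getLast hl'ne]
  have hClen : C.length = n - 1 := by rw [hCdef, List.length_dropLast, hlen]
  have hxl' : x ∈ l' := getD_mem l' (by omega)
  have hxmem := (hperm.mem_iff' x).1 hxl'
  have hn2 : 2 ≤ n := by
    by_contra hc
    have : n = 1 := by omega
    apply h1
    omega
  have hCne : C ≠ [] := List.ne_nil_of_length_pos (by omega)
  have hnd : l'.Nodup := hperm.nodup
  have hndC : C.Nodup ∧ x ∉ C := by
    have := hCx ▸ hnd
    rw [List.nodup_append] at this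
    exact ⟨this.1, fun hc => this.2.2 x hc x (by simp) rfl⟩
  have h1l' : (1:ℕ) ∈ l' := (hperm.mem_iff' 1).2 ⟨le_refl 1, by omega⟩
  have h1C : (1:ℕ) ∈ C := by
    rw [← hCx] at h1l'
    rcases List.mem_append.1 h1l' with h | h
    · exact h
    · simp at h
      exact absurd h.symm h1
  have hCsub : C <+ l' := by
    rw [← hCx]; exact List.sublist_append_left C [x]
  -- last element of C is smaller than x
  have hclast : C.getD (C.length - 1) 0 < x := by
    set c := C.getD (C.length - 1) 0 with hcdef
    have hcC : c ∈ C := getD_mem C (by omega)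
    have hcne : c ≠ x := fun h => hndC.2 (h ▸ hcC)
    by_contra hc
    push_neg at hc
    have hxc : x < c := by omega
    obtain ⟨i₁, hi₁, h1eq⟩ := List.mem_iff_getElem.1 h1C
    have hx1 : 1 < x := by
      have := hxmem.1
      omega
    have hi₁ne : i₁ ≠ C.length - 1 := by
      intro h
      subst h
      have hc1 : c = 1 := by
        rw [hcdef, List.getD_eq_getElem C 0 (by omega)]
        exact h1eq
      omega
    have hcont : ContainsPat l' [1,3,2] := by
      apply contains132_of_indices l' (i := i₁) (j := C.length - 1) (m := C.length)
        (by omega) (by omega) (by omega)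
      · have e1 : l'.getD i₁ 0 = 1 := by
          rw [← hCx, getD_append_left' C [x] (by omega), List.getD_eq_getElem C 0 (by omega), h1eq]
        have e2 : l'.getD C.length 0 = x := by
          rw [← hCx, ← Nat.add_zero C.length, getD_append_offset]
          simp
        rw [e1, e2]
        exact hx1
      · have e2 : l'.getD C.length 0 = x := by
          rw [← hCx, ← Nat.add_zero C.length, getD_append_offset]
          simp
        have e3 : l'.getD (C.length - 1) 0 = c := by
          rw [← hCx, getD_append_left' C [x] (by omega), hcdef]
        rw [e2, e3]
        exact hxc
    exact hav hcont
  by_cases hcase : ∃ i, i < C.length - 1 ∧ IsRLMax C i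
  · -- general case: split C after its last non-final RL max
    obtain ⟨i0, hi0, hrl0⟩ := hcase
    set P : ℕ → Prop := fun i => i < C.length - 1 ∧ IsRLMax C i with hPdef
    set p := Nat.findGreatest P C.length with hpdef
    have hp : P p := Nat.findGreatest_spec (le_of_lt (by omega)) ⟨hi0, hrl0⟩
    obtain ⟨hp1, hp2⟩ := hp
    set A := C.take (p+1) with hA
    set B := C.drop (p+1) with hB
    have hCsplit : C = A ++ B := (List.take_append_drop (p+1) C).symm
    have hAlen : A.length = p + 1 := by rw [hA, List.length_take]; omega
    have hBlen : B.length = C.length - (p+1) := by rw [hB, List.length_drop]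
    have hBne : B ≠ [] := List.ne_nil_of_length_pos (by omega)
    have hBa' : ∀ b ∈ B, b < C.getD p 0 := by
      rw [isRLMax_iff C p (by omega)] at hp2
      intro b hb
      exact hp2 b (by rw [hB] at hb; exact hb)
    -- the max of B sits at the end of C
    obtain ⟨j, hj, hrlB, hmaxB⟩ := exists_rlmax_max B hBne
    have hjlast : p + 1 + j = C.length - 1 := by
      by_contra hne
      have hjlt : p + 1 + j < C.length - 1 := by omega
      have hrlC : IsRLMax C (p + 1 + j) := by
        rw [hCsplit, show p + 1 + j = A.length + j by omega, isRLMax_append_right]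
        exact hrlB
      have hng : ¬ P (p + 1 + j) :=
        Nat.findGreatest_is_greatest (by rw [← hpdef]; omega) (by omega)
      exact hng ⟨hjlt, hrlC⟩
    have hmaxval : B.getD j 0 = C.getD (C.length - 1) 0 := by
      have hoff : C.getD (A.length + j) 0 = B.getD j 0 := by
        conv_lhs => rw [hCsplit]
        exact getD_append_offset A B j
      rw [← hoff]
      congr 1
      omega
    have hBx : ∀ b ∈ B, b < x := fun b hb =>
      lt_of_le_of_lt (hmaxval ▸ hmaxB b hb) hclast
    have hAB : ∀ a ∈ A, ∀ b ∈ B, b < a := by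
      intro a ha b hb
      obtain ⟨ia, hia, haeq⟩ := List.mem_iff_getElem.1 ha
      rcases eq_or_ne ia p with rfl | hne
      · have : a = C.getD p 0 := by
          rw [hCsplit, getD_append_left' A B (by omega), List.getD_eq_getElem A 0 hia, haeq]
        rw [← this] at hBa'
        exact hBa' b hb
      · have hialt : ia < p := by omega
        by_contra hc
        push_neg at hc
        have hanb : a ≠ b := by
          have hnd2 := hCsplit ▸ hndC.1
          rw [List.nodup_append] at hnd2
          intro heq
          exact hnd2.2.2 a ha b hb heq
        have hab : a < b := by omega
        obtain ⟨jb, hjb, hbeq⟩ := List.mem_iff_getElem.1 hb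
        have hcont : ContainsPat C [1,3,2] := by
          apply contains132_of_indices C (i := ia) (j := p) (m := p + 1 + jb)
            (by omega) (by omega) (by omega)
          · have ea : C.getD ia 0 = a := by
              rw [hCsplit, getD_append_left' A B (by omega), List.getD_eq_getElem A 0 hia, haeq]
            have eb : C.getD (p + 1 + jb) 0 = b := by
              rw [hCsplit, show p + 1 + jb = A.length + jb by omega, getD_append_offset,
                List.getD_eq_getElem B 0 hjb, hbeq]
            rw [ea, eb]
            exact hab
          · have eb : C.getD (p + 1 + jb) 0 = b := by
              rw [hCsplit, show p + 1 + jb = A.length + jb by omega, getD_append_offset,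
                List.getD_eq_getElem B 0 hjb, hbeq]
            rw [eb]
            exact hBa' b hb
        exact hav (containsPat_sublist hcont hCsub)
    have hBint : ∀ i, i < B.length - 1 → ¬ IsRLMax B i := by
      intro i hi hrl
      apply Nat.findGreatest_is_greatest (k := p + 1 + i) (by rw [← hpdef]; omega) (by omega)
      refine ⟨by omega, ?_⟩
      rw [hCsplit, show p + 1 + i = A.length + i by omega, isRLMax_append_right]
      exact hrl
    refine ⟨A ++ x :: B, A, x, B, rfl, ?_, hBne, hBx, hAB, hBint⟩
    rw [← hCx, hCsplit]
  · -- C itself is the B-block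
    push_neg at hcase
    have hBx : ∀ b ∈ C, b < x := by
      obtain ⟨j, hj, hrl, hmax⟩ := exists_rlmax_max C hCne
      have hjeq : j = C.length - 1 := by
        by_contra hne
        exact hcase j (by omega) hrl
      intro b hb
      have := hmax b hb
      rw [hjeq] at this
      exact lt_of_le_of_lt this hclast
    refine ⟨[] ++ x :: C, [], x, C, rfl, ?_, hCne, hBx, by simp, hcase⟩
    rw [← hCx]
    simp

/- ### membership transfer along SplitRel -/

lemma splitRel_mem_forward {n k : ℕ} {l l' : List ℕ} (h : SplitRel l l')
    (hl : l ∈ A132 n k) : l' ∈ A132 n (k+1) ∧ l'.getD (l'.length - 1) 0 ≠ 1 := by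
  obtain ⟨hperm, hav, hsc⟩ := hl
  have hperm' : IsPermList n l' := (h.perm'.symm).trans hperm
  have hav' : AvoidsPat l' [1,3,2] := h.avoid_mp hperm.nodup hav
  have hsc' : shortCount l' = k + 1 := by rw [h.shortCount_eq, hsc]
  refine ⟨⟨hperm', hav', hsc'⟩, ?_⟩
  exact h.getD_last (fun y hy => ((hperm.mem_iff' y).1 hy).1)

lemma splitRel_mem_backward {n k : ℕ} {l l' : List ℕ} (h : SplitRel l l')
    (hl' : l' ∈ A132 n k) : l ∈ A132 n (k-1) ∧ 1 ≤ k := by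
  obtain ⟨hperm', hav', hsc'⟩ := hl'
  have hperm : IsPermList n l := h.perm'.trans hperm'
  have hav : AvoidsPat l [1,3,2] := h.avoid_mpr hperm.nodup hav'
  have hsceq : shortCount l' = shortCount l + 1 := h.shortCount_eq
  have hk1 : 1 ≤ k := by omega
  exact ⟨⟨hperm, hav, by omega⟩, hk1⟩

/- ### counting the "last ≠ 1" part -/

lemma ncard_last_ne_one (n k : ℕ) (hn : 1 ≤ n) (hk : k + 1 ≤ n - 1) :
    {l' ∈ A132 n (k+1) | l'.getD (l'.length - 1) 0 ≠ 1}.ncard = (A132 n k).ncard := by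
  classical
  set f : List ℕ → List ℕ := fun l =>
    if h : ∃ l', SplitRel l l' then Classical.choose h else [] with hf
  have hrel : ∀ l ∈ A132 n k, SplitRel l (f l) := by
    intro l hl
    have hex : ∃ l', SplitRel l l' :=
      split_forward hl (exists_nonlast_rlmax hl (by omega))
    rw [hf]
    simp only [dif_pos hex]
    exact Classical.choose_spec hex
  have hbij : Set.BijOn f (A132 n k) {l' ∈ A132 n (k+1) | l'.getD (l'.length - 1) 0 ≠ 1} := by
    refine ⟨?_, ?_, ?_⟩
    · intro l hl
      obtain ⟨hmem, hne⟩ := splitRel_mem_forward (hrel l hl) hl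
      exact ⟨hmem, hne⟩
    · intro l₁ h₁ l₂ h₂ heq
      exact splitRel_left_unique (heq ▸ hrel l₁ h₁) (hrel l₂ h₂)
    · rintro l' ⟨hl', hne⟩
      obtain ⟨l, hrel'⟩ := split_backward hl' hn hne
      obtain ⟨hlmem, hk1⟩ := splitRel_mem_backward hrel' hl'
      simp only [Nat.add_sub_cancel] at hlmem
      refine ⟨l, hlmem, ?_⟩
      exact splitRel_right_unique (hrel l hlmem) hrel'
  rw [← hbij.image_eq]
  exact Set.ncard_image_of_injOn hbij.injOn

/- ### counting the "last = 1" part -/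

lemma ncard_last_eq_one (n k : ℕ) (hn : 2 ≤ n) :
    {l ∈ A132 n k | l.getD (l.length - 1) 0 = 1}.ncard = (A132 (n-1) k).ncard := by
  classical
  set g : List ℕ → List ℕ := fun l => (l.dropLast).map (· - 1) with hg
  have hrange : (List.range' 2 (n-1)).map (· - 1) = List.range' 1 (n-1) := by
    have h2 : List.range' 2 (n-1) = (List.range' 1 (n-1)).map (1 + ·) := by
      rw [List.map_add_range']
    rw [h2, List.map_map]
    have : ((fun x => x - 1) ∘ (fun x => 1 + x)) = id := by
      funext y; simp
    rw [this, List.map_id]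
  have key : ∀ l ∈ A132 n k, l.getD (l.length - 1) 0 = 1 →
      (l.dropLast).Perm (List.range' 2 (n-1)) ∧ (∀ c ∈ l.dropLast, 2 ≤ c ∧ c ≤ n) ∧
      l = l.dropLast ++ [1] := by
    intro l ⟨hperm, hav, hsc⟩ hlast
    have hlen : l.length = n := hperm.len
    have hlne : l ≠ [] := List.ne_nil_of_length_pos (by omega)
    have hl1 : l = l.dropLast ++ [1] := by
      conv_lhs => rw [← List.dropLast_append_getLast hlne]
      congr 1
      rw [List.getLast_eq_getElem, ← List.getD_eq_getElem l 0 (by omega), hlast]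
    have hnd : l.Nodup := hperm.nodup
    have h1nd : (1:ℕ) ∉ l.dropLast := by
      have := hl1 ▸ hnd
      rw [List.nodup_append] at this
      exact fun hc => this.2.2 1 hc 1 (by simp) rfl
    have hmemC : ∀ c ∈ l.dropLast, 2 ≤ c ∧ c ≤ n := by
      intro c hc
      have hcl : c ∈ l := List.dropLast_sublist l |>.mem hc
      have := (hperm.mem_iff' c).1 hcl
      have hcne : c ≠ 1 := fun h => h1nd (h ▸ hc)
      omega
    have hpermC : (l.dropLast).Perm (List.range' 2 (n-1)) := by
      have hr : List.range' 1 n = 1 :: List.range' 2 (n-1) := by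
        rw [show n = (n-1) + 1 by omega, List.range'_succ]
        simp
      have h2 : (l.dropLast ++ [1]).Perm (1 :: List.range' 2 (n-1)) := by
        rw [← hl1, ← hr]; exact hperm
      have h3 : (1 :: l.dropLast).Perm (1 :: List.range' 2 (n-1)) :=
        ((List.perm_append_singleton 1 l.dropLast).symm).trans h2
      exact h3.cons_inv
    exact ⟨hpermC, hmemC, hl1⟩
  have hbij : Set.BijOn g {l ∈ A132 n k | l.getD (l.length - 1) 0 = 1} (A132 (n-1) k) := by
    refine ⟨?_, ?_, ?_⟩
    · rintro l ⟨hl, hlast⟩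
      obtain ⟨hpermC, hmemC, hl1⟩ := key l hl hlast
      obtain ⟨hperm, hav, hsc⟩ := hl
      have hmono : ∀ a ∈ l.dropLast, ∀ b ∈ l.dropLast, (a < b ↔ a - 1 < b - 1) := by
        intro a ha b hb
        have := hmemC a ha; have := hmemC b hb
        omega
      refine ⟨?_, ?_, ?_⟩
      · rw [hg]
        exact (hpermC.map _).trans (by rw [hrange])
      · rw [hg]
        simp only
        rw [avoids_map_iff _ _ hmono (hperm.nodup.sublist (List.dropLast_sublist l))]
        exact hav.sublist (List.dropLast_sublist l)
      · rw [hg]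
        simp only
        rw [shortCount_map_eq _ _ hmono]
        rw [hl1] at hsc
        rw [← shortCount_concat_min (l.dropLast) 1 (fun c hc => by have := hmemC c hc; omega)]
        exact hsc
    · rintro l₁ ⟨h₁, hlast₁⟩ l₂ ⟨h₂, hlast₂⟩ heq
      obtain ⟨_, hmem₁, he₁⟩ := key l₁ h₁ hlast₁
      obtain ⟨_, hmem₂, he₂⟩ := key l₂ h₂ hlast₂
      have hrec : ∀ (l : List ℕ), (∀ c ∈ l.dropLast, 2 ≤ c ∧ c ≤ n) →
          l = l.dropLast ++ [1] → l = ((g l).map (1 + ·)) ++ [1] := by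
        intro l hmem he
        conv_lhs => rw [he]
        congr 1
        rw [hg]
        simp only [List.map_map]
        have : ∀ c ∈ l.dropLast, ((fun x => 1 + x) ∘ (fun x => x - 1)) c = id c := by
          intro c hc
          have := hmem c hc
          simp
          omega
        rw [List.map_congr_left this, List.map_id]
      rw [hrec l₁ hmem₁ he₁, hrec l₂ hmem₂ he₂, heq]
    · rintro l₀ ⟨hperm₀, hav₀, hsc₀⟩
      set M := l₀.map (1 + ·) with hM
      have hmemM : ∀ c ∈ M, 2 ≤ c ∧ c ≤ n := by
        intro c hc
        rw [hM, List.mem_map] at hc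
        obtain ⟨y, hy, rfl⟩ := hc
        have := (hperm₀.mem_iff' y).1 hy
        omega
      have hmono₀ : ∀ a ∈ l₀, ∀ b ∈ l₀, (a < b ↔ 1 + a < 1 + b) := by
        intro a _ b _; omega
      have hpermM : M.Perm (List.range' 2 (n-1)) := by
        rw [hM, ← List.map_add_range' (a := 1) 1 (n-1) 1]
        exact hperm₀.map _
      refine ⟨M ++ [1], ⟨⟨?_, ?_, ?_⟩, ?_⟩, ?_⟩
      · -- perm
        have hr : List.range' 1 n = 1 :: List.range' 2 (n-1) := by
          rw [show n = (n-1) + 1 by omega, List.range'_succ]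
          simp
        rw [IsPermList, hr]
        exact (List.perm_append_singleton 1 M).trans (hpermM.cons 1)
      · -- avoids
        have hndM : M.Nodup := by
          rw [hM]
          exact hperm₀.nodup.map_on (by intro a _ b _ h; omega)
        have hnd : (M ++ [1]).Nodup := by
          rw [List.nodup_append]
          refine ⟨hndM, List.nodup_singleton 1, ?_⟩
          intro a ha b hb hab
          simp at hb
          subst hb
          subst hab
          have := hmemM 1 ha
          omega
        rw [AvoidsPat, contains132_iff _ hnd]
        rintro ⟨i, j, m, hij, hjm, hm, h1, h2⟩
        have hmlen : (M ++ [1]).length = M.length + 1 := by simp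
        rw [hmlen] at hm
        rcases Nat.lt_or_ge m M.length with hmM | hmM
        · -- pattern inside M
          have havM : AvoidsPat M [1,3,2] := by
            rw [hM, avoids_map_iff _ _ hmono₀ hperm₀.nodup]
            exact hav₀
          rw [AvoidsPat, contains132_iff _ hndM] at havM
          apply havM
          refine ⟨i, j, m, hij, hjm, hmM, ?_, ?_⟩
          · rw [← getD_append_left' M [1] (show i < M.length by omega),
              ← getD_append_left' M [1] hmM]
            exact h1
          · rw [← getD_append_left' M [1] (show j < M.length by omega),
              ← getD_append_left' M [1] hmM]
            exact h2
        · -- m is the final 1 : impossible since all M ≥ 2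
          have hmeq : m = M.length := by omega
          have hv : (M ++ [1]).getD m 0 = 1 := by
            rw [hmeq, ← Nat.add_zero M.length, getD_append_offset]
            simp
          rw [hv] at h1
          have : (M ++ [1]).getD i 0 ∈ M := by
            rw [getD_append_left' M [1] (show i < M.length by omega)]
            exact getD_mem M (by omega)
          have := hmemM _ this
          omega
      · -- shortCount
        rw [shortCount_concat_min M 1 (fun c hc => by have := hmemM c hc; omega), hM,
          shortCount_map_eq _ _ hmono₀]
        exact hsc₀
      · -- last = 1
        have : (M ++ [1]).length - 1 = M.length + 0 := by simp
        rw [this, getD_append_offset]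
        simp
      · -- g (M ++ [1]) = l₀
        rw [hg]
        simp only [List.dropLast_concat, hM, List.map_map]
        have : ∀ c ∈ l₀, ((fun x => x - 1) ∘ (fun x => 1 + x)) c = id c := by
          intro c _; simp
        rw [List.map_congr_left this, List.map_id]
  rw [← hbij.image_eq]
  exact (Set.ncard_image_of_injOn hbij.injOn).symm

/- ### the case k = 0 : only the decreasing permutation -/

lemma A132_zero (n : ℕ) (hn : 1 ≤ n) : A132 n 0 = {(List.range' 1 n).reverse} := by
  have hrlen : ((List.range' 1 n).reverse).length = n := by simp
  have hrval : ∀ i (h : i < n), ((List.range' 1 n).reverse)[i]'(by omega) = n - i := by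
    intro i h
    rw [List.getElem_reverse]
    rw [List.getElem_range']
    simp only [List.length_range'] at *
    omega
  ext l
  simp only [A132, Set.mem_setOf_eq, Set.mem_singleton_iff]
  constructor
  · rintro ⟨hperm, hav, hsc⟩
    have hlen : l.length = n := hperm.len
    have hall : ∀ i, i < l.length → IsRLMax l i := by
      intro i hi
      by_contra hc
      have hne : {i | i < l.length ∧ ¬ IsRLMax l i}.Nonempty := ⟨i, hi, hc⟩
      have hfin : {i | i < l.length ∧ ¬ IsRLMax l i}.Finite :=
        Set.Finite.subset (Set.finite_Iio l.length) (fun j hj => hj.1)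
      have := (Set.ncard_eq_zero hfin).1 hsc
      rw [this] at hne
      exact Set.not_nonempty_empty hne
    have hsorted : l.Pairwise (· > ·) := by
      rw [List.pairwise_iff_getElem]
      intro i j hi hj hij
      have := hall i hi j hij hj
      rwa [List.getD_eq_getElem l 0 hj, List.getD_eq_getElem l 0 hi] at this
    have hsorted' : ((List.range' 1 n).reverse).Pairwise (· > ·) := by
      rw [List.pairwise_iff_getElem]
      intro i j hi hj hij
      rw [hrlen] at hi hj
      rw [hrval i hi, hrval j hj]
      omega
    haveI : IsAntisymm ℕ (· > ·) := ⟨fun a b h1 h2 => absurd h1 (by omega)⟩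
    exact List.Perm.eq_of_pairwise' hsorted hsorted' (hperm.trans (List.reverse_perm _).symm)
  · rintro rfl
    have hperm : IsPermList n ((List.range' 1 n).reverse) := List.reverse_perm _
    have hall : ∀ i, i < n → IsRLMax ((List.range' 1 n).reverse) i := by
      intro i hi j hij hj
      rw [hrlen] at hj
      rw [List.getD_eq_getElem _ 0 (by omega), List.getD_eq_getElem _ 0 (by omega),
        hrval i hi, hrval j hj]
      omega
    refine ⟨hperm, ?_, ?_⟩
    · rw [AvoidsPat, contains132_iff _ hperm.nodup]
      rintro ⟨i, j, m, hij, hjm, hm, h1, h2⟩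
      rw [hrlen] at hm
      rw [List.getD_eq_getElem _ 0 (by rw [hrlen]; omega),
        List.getD_eq_getElem _ 0 (by rw [hrlen]; omega), hrval i (by omega), hrval m hm] at h1
      omega
    · rw [shortCount]
      have : {i | i < ((List.range' 1 n).reverse).length ∧
          ¬ IsRLMax ((List.range' 1 n).reverse) i} = ∅ := by
        ext i
        simp only [Set.mem_setOf_eq, Set.mem_empty_iff_false, iff_false, not_and, not_not]
        rw [hrlen]
        exact hall i
      rw [this, Set.ncard_empty]

/- ### the Pascal-type identity for ballot numbers -/

lemma T_identity (m j : ℕ) :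
    ((m:ℚ) + 2 - (j+1)) / (m+2) * ((m+j+2).choose (m+1) : ℚ) =
    ((m:ℚ) + 2 - j) / (m+2) * ((m+j+1).choose (m+1) : ℚ) +
    ((m:ℚ) + 1 - (j+1)) / (m+1) * ((m+j+1).choose m : ℚ) := by
  have pascal : (m+j+2).choose (m+1) = (m+j+1).choose m + (m+j+1).choose (m+1) := by
    have := Nat.choose_succ_succ (m+j+1) m
    convert this using 2 <;> omega
  have key : (m+j+1).choose (m+1) * (m+1) = (m+j+1).choose m * (j+1) := by
    have := Nat.choose_succ_right_eq (m+j+1) m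
    rwa [show (m+j+1) - m = j + 1 by omega] at this
  have keyQ : ((m+j+1).choose (m+1) : ℚ) * ((m:ℚ)+1) = ((m+j+1).choose m : ℚ) * ((j:ℚ)+1) := by
    exact_mod_cast key
  rw [pascal]
  push_cast
  have h1 : (m:ℚ) + 2 ≠ 0 := by positivity
  have h2 : (m:ℚ) + 1 ≠ 0 := by positivity
  field_simp
  linear_combination (-1 : ℚ) * keyQ

/-- The number of 132-avoiding permutations of length `n` with exactly `k` short values is
`T_{n-1,k} = ((n-k)/n) * choose (n-1+k) (n-1)` for `0 ≤ k ≤ n-1`, and is zero for `k ≥ n`. -/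
theorem card_A132 (n : ℕ) (hn : 1 ≤ n) :
    (∀ k, k ≤ n - 1 →
      ((A132 n k).ncard : ℚ) = ((n : ℚ) - k) / n * ((n - 1 + k).choose (n - 1) : ℚ)) ∧
    (∀ k, n ≤ k → A132 n k = ∅) := by
  have main : ∀ N, 1 ≤ N → ∀ k, k ≤ N - 1 →
      ((A132 N k).ncard : ℚ) = ((N : ℚ) - k) / N * ((N - 1 + k).choose (N - 1) : ℚ) := by
    intro N
    induction N using Nat.strong_induction_on with
    | _ N IH =>
      intro hN k
      induction k with
      | zero =>
        intro _
        rw [A132_zero N hN, Set.ncard_singleton]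
        have hnn : (N:ℚ) ≠ 0 := Nat.cast_ne_zero.2 (by omega)
        rw [Nat.add_zero, Nat.choose_self]
        push_cast
        rw [sub_zero, div_self hnn, one_mul]
      | succ j IHj =>
        intro hk
        have hN2 : 2 ≤ N := by omega
        obtain ⟨m, rfl⟩ : ∃ m, N = m + 2 := ⟨N - 2, by omega⟩
        have hjm : j ≤ m := by omega
        set S1 := {l ∈ A132 (m+2) (j+1) | l.getD (l.length - 1) 0 = 1} with hS1
        set S2 := {l ∈ A132 (m+2) (j+1) | l.getD (l.length - 1) 0 ≠ 1} with hS2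
        have hsplit : A132 (m+2) (j+1) = S1 ∪ S2 := by
          ext l
          constructor
          · intro hl
            by_cases h : l.getD (l.length - 1) 0 = 1
            · exact Or.inl ⟨hl, h⟩
            · exact Or.inr ⟨hl, h⟩
          · rintro (⟨hl, _⟩ | ⟨hl, _⟩) <;> exact hl
        have hdisj : Disjoint S1 S2 := by
          rw [Set.disjoint_left]
          rintro l ⟨_, h⟩ ⟨_, h'⟩
          exact h' h
        have hfin1 : S1.Finite :=
          (A132_finite (m+2) (j+1)).subset (fun l hl => hl.1)
        have hfin2 : S2.Finite :=
          (A132_finite (m+2) (j+1)).subset (fun l hl => hl.1)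
        have hcard : (A132 (m+2) (j+1)).ncard = S1.ncard + S2.ncard := by
          rw [hsplit]
          exact Set.ncard_union_eq hdisj hfin1 hfin2
        have hc1 : S1.ncard = (A132 (m+2-1) (j+1)).ncard := ncard_last_eq_one (m+2) (j+1) hN2
        have hc2 : S2.ncard = (A132 (m+2) j).ncard := ncard_last_ne_one (m+2) j (by omega) (by omega)
        have hv2 : ((A132 (m+2) j).ncard : ℚ) =
            ((m+2 : ℚ) - j) / (m+2) * (((m+2-1) + j).choose (m+2-1) : ℚ) := by
          have := IHj (by omega)
          push_cast at this ⊢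
          convert this using 3
        have hv1 : ((A132 (m+1) (j+1)).ncard : ℚ) =
            ((m+1 : ℚ) - (j+1)) / (m+1) * ((m + (j+1)).choose m : ℚ) := by
          rcases Nat.lt_or_ge (j+1) (m+1) with hlt | hge
          · have := IH (m+1) (by omega) (by omega) (j+1) (by omega)
            rw [this, show m + 1 - 1 = m by omega]
            push_cast
            ring
          · have hjm' : j = m := by omega
            subst hjm'
            have hempty : A132 (j+1) (j+1) = ∅ :=
              A132_subset_empty (j+1) (j+1) (by omega) (by omega)
            rw [hempty, Set.ncard_empty]
            push_cast
            ring
        rw [hcard]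
        push_cast
        rw [hc1, hc2] at *
        rw [show m + 2 - 1 = m + 1 by omega] at *
        rw [hv1, hv2]
        have hgoal := T_identity m j
        push_cast at hgoal ⊢
        rw [show m + 1 + (j+1) = m + j + 2 by omega, show m + 1 + j = m + j + 1 by omega,
          show m + (j+1) = m + j + 1 by omega]
        rw [hgoal]
        ring
  constructor
  · exact main n hn
  · intro k hk
    exact A132_subset_empty n k hn hk
end

section
/- For all n ≥ 1 and k ≥ 0, the number of 132-avoiding permutations of length n with exactly k short values satisfies |A(n,k)| = Σ_{m=0}^{n−1} C_m · |A(n−1−m, k−m)|, where C_m is the m-th Catalan number (C_0 = 1), |A(0,j)| is 1 if j = 0 and 0 otherwise, and |A(a,b)| = 0 when b < 0. (This is the recurrence obtained by splitting a 132-avoiding permutation at its maximum entry: all m entries to the left of the maximum are short values, and the part to the right contributes the remaining k−m short values.) -/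
open List

attribute [local instance] Classical.propDecidable

/-! ### Auxiliary development -/

/-- 132-avoiding arrangements of the values `a, a+1, …, a+m-1`. -/
def Avp (a m : ℕ) : Set (List ℕ) :=
  {L | L.Perm (List.range' a m) ∧ AvoidsPat L [1, 3, 2]}

lemma containsPat132_iff (l : List ℕ) :
    ContainsPat l [1, 3, 2] ↔ ∃ x y z : ℕ, [x, y, z].Sublist l ∧ x < z ∧ z ≤ y := by
  constructor
  · rintro ⟨s, hs, hlen, hiso⟩
    have h3 : s.length = 3 := by simpa using hlen
    obtain ⟨x, y, z, rfl⟩ := List.length_eq_three.mp h3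
    refine ⟨x, y, z, hs, ?_, ?_⟩
    · have := hiso 0 2 (by norm_num) (by simp)
      simp at this
      exact this
    · have := hiso 1 2 (by norm_num) (by simp)
      simp at this
      omega
  · rintro ⟨x, y, z, hs, h1, h2⟩
    refine ⟨[x, y, z], hs, by simp, ?_⟩
    intro i j hij hj
    simp only [List.length_cons, List.length_nil] at hj
    interval_cases j <;> interval_cases i <;> simp <;> omega
lemma avoids_sublist {s l : List ℕ} (h : s.Sublist l) (hl : AvoidsPat l [1, 3, 2]) :
    AvoidsPat s [1, 3, 2] := fun hc => hl (by obtain ⟨t, ht, hi⟩ := hc; exact ⟨t, ht.trans h, hi⟩)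
lemma avoids_split {L R : List ℕ} {c : ℕ} (hL : ∀ x ∈ L, x < c) (hR : ∀ y ∈ R, y < c)
    (hne : ∀ x ∈ L, ∀ y ∈ R, x ≠ y) :
    AvoidsPat (L ++ c :: R) [1, 3, 2] ↔
      (AvoidsPat L [1, 3, 2] ∧ AvoidsPat R [1, 3, 2] ∧ ∀ x ∈ L, ∀ y ∈ R, y < x) := by
  constructor
  · intro h
    refine ⟨avoids_sublist (List.sublist_append_left _ _) h,
      avoids_sublist (((List.sublist_cons_self _ _).trans (List.sublist_append_right _ _))) h, ?_⟩
    intro x hx y hy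
    by_contra hxy
    have hxy' : x < y := by
      have h5 := hne x hx y hy
      omega
    apply h
    rw [containsPat132_iff]
    refine ⟨x, c, y, ?_, hxy', (hR y hy).le⟩
    have h1 : [x].Sublist L := List.singleton_sublist.mpr hx
    have h2 : [c, y].Sublist (c :: R) := (List.singleton_sublist.mpr hy).cons₂ c
    exact h1.append h2
  · rintro ⟨hA, hB, hlt⟩ hcont
    obtain ⟨x, y, z, hs, h1, h2⟩ := (containsPat132_iff _).mp hcont
    rw [List.sublist_append_iff] at hs
    obtain ⟨s1, s2, heq, hs1, hs2⟩ := hs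
    rcases s1 with _ | ⟨a, (_ | ⟨b, (_ | ⟨d, s1'⟩)⟩)⟩
    · simp only [List.nil_append] at heq
      subst heq
      rcases List.sublist_cons_iff.mp hs2 with h' | ⟨r, hr, hr'⟩
      · exact hB ((containsPat132_iff _).mpr ⟨x, y, z, h', h1, h2⟩)
      · injection hr with hx hr2
        subst hx
        subst hr2
        have hz : z ∈ R := hr'.subset (by simp)
        exact absurd (hR z hz) (by omega)
    · simp only [List.cons_append, List.nil_append] at heq
      injection heq with hx heq2
      subst hx
      subst heq2
      have hxL : x ∈ L := List.singleton_sublist.mp hs1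
      rcases List.sublist_cons_iff.mp hs2 with h' | ⟨r, hr, hr'⟩
      · have hy : y ∈ R := h'.subset (by simp)
        have := hlt x hxL y hy
        omega
      · injection hr with hy hr2
        subst hr2
        have hz : z ∈ R := hr'.subset (by simp)
        have := hlt x hxL z hz
        omega
    · simp only [List.cons_append, List.nil_append] at heq
      injection heq with hx heq2
      injection heq2 with hy heq3
      subst hx
      subst hy
      subst heq3
      have hxL : x ∈ L := hs1.subset (by simp)
      have hyL : y ∈ L := hs1.subset (by simp)
      rcases List.sublist_cons_iff.mp hs2 with h' | ⟨r, hr, hr'⟩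
      · have hz : z ∈ R := h'.subset (by simp)
        have := hlt x hxL z hz
        omega
      · injection hr with hz hr2
        subst hz
        have := hL y hyL
        omega
    · simp only [List.cons_append, List.nil_append] at heq
      injection heq with hx heq2
      injection heq2 with hy heq3
      injection heq3 with hz heq4
      subst hx
      subst hy
      subst hz
      have h0 : s1' = [] ∧ s2 = [] := List.append_eq_nil_iff.mp heq4.symm
      obtain ⟨rfl, rfl⟩ := h0
      exact hA ((containsPat132_iff _).mpr ⟨x, y, z, hs1, h1, h2⟩)
lemma my_ncard_prod {α β : Type*} (s : Set α) (t : Set β) :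
    (s ×ˢ t).ncard = s.ncard * t.ncard := by
  rw [← Nat.card_coe_set_eq, ← Nat.card_coe_set_eq, ← Nat.card_coe_set_eq,
    Nat.card_congr (Equiv.Set.prod s t), Nat.card_prod]

lemma my_ncard_biUnion {α ι : Type*} (s : Finset ι) (f : ι → Set α)
    (hfin : ∀ i ∈ s, (f i).Finite)
    (hdisj : ∀ i ∈ s, ∀ j ∈ s, i ≠ j → Disjoint (f i) (f j)) :
    (⋃ i ∈ s, f i).ncard = ∑ i ∈ s, (f i).ncard := by
  classical
  induction s using Finset.induction_on with
  | empty => simp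
  | @insert a s ha ih =>
    rw [Finset.sum_insert ha, Finset.set_biUnion_insert _ _ _]
    rw [Set.ncard_union_eq ?_ (hfin a (Finset.mem_insert_self a s)) ?_,
      ih (fun i hi => hfin i (Finset.mem_insert_of_mem hi))
        (fun i hi j hj hij => hdisj i (Finset.mem_insert_of_mem hi) j (Finset.mem_insert_of_mem hj) hij)]
    · rw [Set.disjoint_iUnion₂_right]
      intro i hi
      exact hdisj a (Finset.mem_insert_self a s) i (Finset.mem_insert_of_mem hi)
        (fun h => ha (h ▸ hi))
    · exact Set.Finite.biUnion s.finite_toSet (fun i hi => hfin i (Finset.mem_insert_of_mem hi))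
lemma finite_perm (r : List ℕ) : {l : List ℕ | l.Perm r}.Finite := by
  apply Set.Finite.subset (r.permutations.toFinset.finite_toSet)
  intro l hl
  simp only [Finset.coe_sort_coe, List.coe_toFinset, Set.mem_setOf_eq, List.mem_permutations]
  exact hl
lemma ncard_setOf_lt (m : ℕ) : {i : ℕ | i < m}.ncard = m := by
  have h : {i : ℕ | i < m} = ↑(Finset.range m) := by ext i; simp
  rw [h, Set.ncard_coe_finset, Finset.card_range]

lemma sandwich {L R : List ℕ} {N : ℕ} (h : (L ++ R).Perm (List.range' 1 N))
    (hlt : ∀ x ∈ L, ∀ y ∈ R, y < x) :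
    L.Perm (List.range' (N + 1 - L.length) L.length) ∧
      R.Perm (List.range' 1 (N - L.length)) := by
  have hnd : (L ++ R).Nodup := h.nodup_iff.mpr List.nodup_range'
  have hndL : L.Nodup := hnd.of_append_left
  have hndR : R.Nodup := hnd.of_append_right
  have hlen : L.length + R.length = N := by
    have := h.length_eq
    simpa using this
  have hmem : ∀ z ∈ L ++ R, 1 ≤ z ∧ z ≤ N := by
    intro z hz
    have := List.mem_range'_1.mp (h.subset hz)
    omega
  set m := L.length with hm
  have hLsub : L ⊆ List.range' (N + 1 - m) m := by
    intro x hx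
    have hx' := hmem x (List.mem_append_left _ hx)
    have hRsub : R ⊆ List.range' 1 (x - 1) := by
      intro y hy
      have hy' := hmem y (List.mem_append_right _ hy)
      have := hlt x hx y hy
      rw [List.mem_range'_1]
      omega
    have := (List.subperm_of_subset hndR hRsub).length_le
    rw [List.length_range'] at this
    rw [List.mem_range'_1]
    omega
  have hRsub' : R ⊆ List.range' 1 (N - m) := by
    intro y hy
    have hy' := hmem y (List.mem_append_right _ hy)
    have hLsub2 : L ⊆ List.range' (y + 1) (N - y) := by
      intro x hx
      have hx' := hmem x (List.mem_append_left _ hx)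
      have := hlt x hx y hy
      rw [List.mem_range'_1]
      omega
    have := (List.subperm_of_subset hndL hLsub2).length_le
    rw [List.length_range'] at this
    rw [List.mem_range'_1]
    omega
  constructor
  · exact (List.subperm_of_subset hndL hLsub).perm_of_length_le
      (by rw [List.length_range'])
  · exact (List.subperm_of_subset hndR hRsub').perm_of_length_le
      (by rw [List.length_range']; omega)
lemma shortCount_split {L R : List ℕ} {c : ℕ} (hL : ∀ x ∈ L, x < c) (hR : ∀ y ∈ R, y < c) :
    shortCount (L ++ c :: R) = L.length + shortCount R := by
  set m := L.length with hm
  set l := L ++ c :: R with hldef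
  have hlen : l.length = m + 1 + R.length := by
    simp only [hldef, List.length_append, List.length_cons]
    omega
  have getL : ∀ i, i < m → l.getD i 0 = L.getD i 0 := fun i h => List.getD_append _ _ _ _ h
  have getc : l.getD m 0 = c := by
    rw [List.getD_append_right _ _ _ _ (le_refl m), Nat.sub_self]
    rfl
  have getR : ∀ j, l.getD (m + 1 + j) 0 = R.getD j 0 := by
    intro j
    rw [List.getD_append_right _ _ _ _ (by omega), show m + 1 + j - m = j + 1 by omega]
    rfl
  have memL : ∀ i, i < m → l.getD i 0 < c := by
    intro i h
    rw [getL i h]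
    have h' : i < L.length := h
    rw [List.getD_eq_getElem _ _ h']
    exact hL _ (List.getElem_mem h')
  have memR : ∀ j, j < R.length → l.getD (m + 1 + j) 0 < c := by
    intro j h
    rw [getR j, List.getD_eq_getElem _ _ h]
    exact hR _ (List.getElem_mem h)
  have hshort : ∀ i, i < m → ¬ IsRLMax l i := by
    intro i hi hmax
    have h1 := hmax m (by omega) (by omega)
    rw [getc] at h1
    exact absurd h1 (not_lt.mpr (memL i hi).le)
  have hmaxm : IsRLMax l m := by
    intro j hj hjlen
    rw [getc]
    have h1 : l.getD j 0 = l.getD (m + 1 + (j - m - 1)) 0 := by congr 1; omega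
    rw [h1, getR]
    have : j - m - 1 < R.length := by omega
    rw [List.getD_eq_getElem _ _ this]
    exact hR _ (List.getElem_mem this)
  have hiff : ∀ j, j < R.length → (IsRLMax l (m + 1 + j) ↔ IsRLMax R j) := by
    intro j hjR
    constructor
    · intro h j' h1 h2
      have h3 := h (m + 1 + j') (by omega) (by omega)
      rwa [getR, getR] at h3
    · intro h j'' h1 h2
      have h4 : j'' = m + 1 + (j'' - m - 1) := by omega
      rw [h4, getR, getR]
      exact h (j'' - m - 1) (by omega) (by omega)
  have hset : {i | i < l.length ∧ ¬ IsRLMax l i}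
      = {i | i < m} ∪ ((fun j => m + 1 + j) '' {j | j < R.length ∧ ¬ IsRLMax R j}) := by
    ext i
    simp only [Set.mem_setOf_eq, Set.mem_union, Set.mem_image]
    constructor
    · rintro ⟨hilen, hnot⟩
      rcases lt_trichotomy i m with h | h | h
      · exact Or.inl h
      · exact absurd (h ▸ hmaxm) hnot
      · refine Or.inr ⟨i - m - 1, ⟨by omega, fun hR' => hnot ?_⟩, by omega⟩
        have h4 : i = m + 1 + (i - m - 1) := by omega
        rw [h4]
        exact (hiff _ (by omega)).mpr hR'
    · rintro (h | ⟨j, ⟨hj, hnot⟩, rfl⟩)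
      · exact ⟨by omega, hshort i h⟩
      · exact ⟨by omega, fun hc => hnot ((hiff j hj).mp hc)⟩
  have hinj : Function.Injective (fun j : ℕ => m + 1 + j) := by
    intro a b hab
    simp only at hab
    omega
  have hf1 : {i : ℕ | i < m}.Finite := (Set.finite_Iio m).subset (fun i hi => hi)
  have hf2 : (((fun j => m + 1 + j) '' {j | j < R.length ∧ ¬ IsRLMax R j})).Finite :=
    ((Set.finite_Iio R.length).subset (fun j hj => hj.1)).image _
  have hdisj : Disjoint {i : ℕ | i < m} ((fun j => m + 1 + j) '' {j | j < R.length ∧ ¬ IsRLMax R j}) := by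
    rw [Set.disjoint_left]
    rintro i hi ⟨j, hj, rfl⟩
    simp only [Set.mem_setOf_eq] at hi
    omega
  rw [shortCount, hset, Set.ncard_union_eq hdisj hf1 hf2, ncard_setOf_lt,
    Set.ncard_image_of_injective _ hinj]
  rfl
lemma perm_assemble {L R : List ℕ} {n m : ℕ} (hm : m < n)
    (hLp : L.Perm (List.range' (n - m) m)) (hRp : R.Perm (List.range' 1 (n - 1 - m))) :
    (L ++ n :: R).Perm (List.range' 1 n) := by
  have h4 : List.range' 1 (n - 1 - m) ++ List.range' (n - m) m = List.range' 1 (n - 1) := by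
    have h := List.range'_append (s := 1) (m := n - 1 - m) (n := m) (step := 1)
    rw [show 1 + 1 * (n - 1 - m) = n - m by omega, show n - 1 - m + m = n - 1 by omega] at h
    exact h
  have h5 : List.range' 1 (n - 1) ++ [n] = List.range' 1 n := by
    have h := List.range'_append (s := 1) (m := n - 1) (n := 1) (step := 1)
    rw [show 1 + 1 * (n - 1) = n by omega, show n - 1 + 1 = n by omega, List.range'_one] at h
    exact h
  calc L ++ n :: R ~ n :: (L ++ R) := List.perm_middle
    _ ~ n :: (List.range' 1 (n - 1 - m) ++ List.range' (n - m) m) :=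
        ((hLp.append hRp).trans List.perm_append_comm).cons n
    _ = n :: List.range' 1 (n - 1) := by rw [h4]
    _ ~ List.range' 1 (n - 1) ++ [n] := (List.perm_append_singleton _ _).symm
    _ = List.range' 1 n := h5
lemma bijOn_split (n m k : ℕ) (hn : 1 ≤ n) (hm : m < n) :
    Set.BijOn (fun p : List ℕ × List ℕ => p.1 ++ n :: p.2)
      ((Avp (n - m) m) ×ˢ {R | R ∈ Avp 1 (n - 1 - m) ∧ m + shortCount R = k})
      {l | l ∈ A132 n k ∧ m < l.length ∧ l.getD m 0 = n} := by
  refine ⟨?_, ?_, ?_⟩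
  · rintro ⟨L, R⟩ ⟨⟨hLp, hLa⟩, ⟨⟨hRp, hRa⟩, hsc⟩⟩
    have hLlen : L.length = m := by rw [hLp.length_eq, List.length_range']
    have hRlen : R.length = n - 1 - m := by rw [hRp.length_eq, List.length_range']
    have hLmem : ∀ x ∈ L, n - m ≤ x ∧ x < n := by
      intro x hx
      have h := List.mem_range'_1.mp (hLp.subset hx)
      omega
    have hRmem : ∀ y ∈ R, 1 ≤ y ∧ y < n - m := by
      intro y hy
      have h := List.mem_range'_1.mp (hRp.subset hy)
      omega
    have hLn : ∀ x ∈ L, x < n := fun x hx => (hLmem x hx).2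
    have hRn : ∀ y ∈ R, y < n := fun y hy => by have := hRmem y hy; omega
    have hne : ∀ x ∈ L, ∀ y ∈ R, x ≠ y := fun x hx y hy => by
      have h1 := hLmem x hx; have h2 := hRmem y hy; omega
    refine ⟨⟨perm_assemble hm hLp hRp, ?_, ?_⟩, ?_, ?_⟩
    · rw [avoids_split hLn hRn hne]
      exact ⟨hLa, hRa, fun x hx y hy => by
        have h1 := hLmem x hx; have h2 := hRmem y hy; omega⟩
    · rw [shortCount_split hLn hRn, hLlen]
      exact hsc
    · simp only [List.length_append, List.length_cons]
      omega
    · show (L ++ n :: R).getD m 0 = n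
      rw [List.getD_append_right _ _ _ _ (by omega), hLlen, Nat.sub_self]
      rfl
  · rintro ⟨L1, R1⟩ ⟨⟨h1p, _⟩, _⟩ ⟨L2, R2⟩ ⟨⟨h2p, _⟩, _⟩ heq
    simp only at heq
    have hlen : L1.length = L2.length := by
      rw [h1p.length_eq, h2p.length_eq]
    obtain ⟨hLeq, hReq⟩ := List.append_inj heq hlen
    injection hReq with _ hR2
    exact Prod.ext hLeq hR2
  · rintro l ⟨⟨hperm, havoid, hsc⟩, hmlen, hget⟩
    have hperm' : l.Perm (List.range' 1 n) := hperm
    have hlen : l.length = n := by rw [hperm'.length_eq, List.length_range']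
    set L := l.take m with hLdef
    set R := l.drop (m + 1) with hRdef
    have hgetm : l[m]'hmlen = n := by
      rw [← List.getD_eq_getElem l 0 hmlen]
      exact hget
    have hdec : l = L ++ n :: R := by
      conv_lhs => rw [← List.take_append_drop m l]
      rw [List.drop_eq_getElem_cons hmlen, hgetm]
    have hnd : l.Nodup := hperm'.nodup_iff.mpr List.nodup_range'
    have hnd2 : (L ++ n :: R).Nodup := hdec ▸ hnd
    have hndL : L.Nodup := hnd2.of_append_left
    have hndnR : (n :: R).Nodup := hnd2.of_append_right
    have hdisj : ∀ x ∈ L, x ∉ n :: R := fun x hx hx' =>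
      (List.disjoint_of_nodup_append hnd2) hx hx'
    have hmem : ∀ x ∈ l, 1 ≤ x ∧ x ≤ n := by
      intro x hx
      have := List.mem_range'_1.mp (hperm'.subset hx)
      omega
    have hLn : ∀ x ∈ L, x < n := by
      intro x hx
      have h1 := hmem x (hdec ▸ List.mem_append_left _ hx)
      have h2 : x ≠ n := fun h => hdisj x hx (h ▸ List.mem_cons_self)
      omega
    have hRn : ∀ y ∈ R, y < n := by
      intro y hy
      have h1 := hmem y (hdec ▸ List.mem_append_right _ (List.mem_cons_of_mem _ hy))
      have h2 : y ≠ n := fun h => (List.nodup_cons.mp hndnR).1 (h ▸ hy)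
      omega
    have hne : ∀ x ∈ L, ∀ y ∈ R, x ≠ y := fun x hx y hy h =>
      hdisj x hx (h ▸ List.mem_cons_of_mem _ hy)
    have havoid' : AvoidsPat (L ++ n :: R) [1, 3, 2] := hdec ▸ havoid
    obtain ⟨hLa, hRa, hlt⟩ := (avoids_split hLn hRn hne).mp havoid'
    have hLlen : L.length = m := by
      rw [hLdef, List.length_take]
      omega
    have hLRperm : (L ++ R).Perm (List.range' 1 (n - 1)) := by
      have h1 : (L ++ n :: R).Perm (n :: (L ++ R)) := List.perm_middle
      have h2 : (n :: (L ++ R)).Perm (List.range' 1 n) := (hdec ▸ h1.symm).trans hperm'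
      have h3 : List.range' 1 (n - 1) ++ [n] = List.range' 1 n := by
        have h := List.range'_append (s := 1) (m := n - 1) (n := 1) (step := 1)
        rw [show 1 + 1 * (n - 1) = n by omega, show n - 1 + 1 = n by omega,
          List.range'_one] at h
        exact h
      have h4 : (List.range' 1 n).Perm (n :: List.range' 1 (n - 1)) := by
        rw [← h3]
        exact List.perm_append_singleton _ _
      exact (h2.trans h4).cons_inv
    obtain ⟨hLp, hRp⟩ := sandwich hLRperm hlt
    rw [hLlen] at hLp hRp
    rw [show n - 1 + 1 - m = n - m by omega] at hLp
    have hscR : m + shortCount R = k := by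
      rw [← hsc, hdec, shortCount_split hLn hRn, hLlen]
    exact ⟨(L, R), ⟨⟨hLp, hLa⟩, ⟨⟨hRp, hRa⟩, hscR⟩⟩, hdec.symm⟩
lemma shortCount_le (l : List ℕ) : shortCount l ≤ l.length := by
  have hsub : {i | i < l.length ∧ ¬ IsRLMax l i} ⊆ {i : ℕ | i < l.length} := fun i hi => hi.1
  have h := Set.ncard_le_ncard hsub ((Set.finite_Iio l.length).subset (fun i hi => hi))
  rw [ncard_setOf_lt] at h
  exact h
lemma A132_empty {n k : ℕ} (h : n < k) : A132 n k = ∅ := by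
  ext l
  simp only [A132, Set.mem_setOf_eq, Set.mem_empty_iff_false, iff_false, not_and]
  intro hp ha hsc
  have h1 : l.length = n := by rw [hp.length_eq, List.length_range']
  have := shortCount_le l
  omega
lemma containsPat_map_add (d : ℕ) (l : List ℕ) :
    ContainsPat (l.map (· + d)) [1, 3, 2] ↔ ContainsPat l [1, 3, 2] := by
  rw [containsPat132_iff, containsPat132_iff]
  constructor
  · rintro ⟨x, y, z, hs, h1, h2⟩
    rw [List.sublist_map_iff] at hs
    obtain ⟨l', hl', heq⟩ := hs
    rcases l' with _ | ⟨a, (_ | ⟨b, (_ | ⟨e, (_ | ⟨f, t⟩)⟩)⟩)⟩ <;> simp only [List.map_cons, List.map_nil] at heq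
    · exact absurd heq (by simp)
    · exact absurd heq (by simp)
    · exact absurd heq (by simp)
    · injection heq with hx heq2
      injection heq2 with hy heq3
      injection heq3 with hz _
      exact ⟨a, b, e, hl', by omega, by omega⟩
    · exact absurd heq (by simp)
  · rintro ⟨x, y, z, hs, h1, h2⟩
    exact ⟨x + d, y + d, z + d, by simpa using hs.map (· + d), by omega, by omega⟩

lemma avp_shift (d m : ℕ) : (Avp (1 + d) m).ncard = (Avp 1 m).ncard := by
  have hr : List.range' (1 + d) m = (List.range' 1 m).map (· + d) := by
    rw [List.range'_eq_map_range, List.range'_eq_map_range, List.map_map]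
    exact List.map_congr_left (fun a _ => by simp; omega)
  have himg : Avp (1 + d) m = (fun L => L.map (· + d)) '' Avp 1 m := by
    ext L'
    constructor
    · rintro ⟨hp, ha⟩
      refine ⟨L'.map (· - d), ⟨?_, ?_⟩, ?_⟩
      · have h1 := hp.map (· - d)
        rw [hr, List.map_map] at h1
        have h2 : (List.range' 1 m).map ((· - d) ∘ (· + d)) = List.range' 1 m := by
          have : ((· - d) ∘ (· + d) : ℕ → ℕ) = id := by funext a; simp
          rw [this, List.map_id]
        rwa [h2] at h1
      · intro hc
        apply ha
        rw [containsPat132_iff] at hc ⊢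
        obtain ⟨x, y, z, hs, h1, h2⟩ := hc
        rw [List.sublist_map_iff] at hs
        obtain ⟨l', hl', heq⟩ := hs
        rcases l' with _ | ⟨a, (_ | ⟨b, (_ | ⟨e, (_ | ⟨f, t⟩)⟩)⟩)⟩ <;>
          simp only [List.map_cons, List.map_nil] at heq
        · exact absurd heq (by simp)
        · exact absurd heq (by simp)
        · exact absurd heq (by simp)
        · injection heq with hx heq2
          injection heq2 with hy heq3
          injection heq3 with hz _
          have hmem : ∀ w ∈ L', 1 + d ≤ w := by
            intro w hw
            exact (List.mem_range'_1.mp (hp.subset hw)).1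
          have ha' := hmem a (hl'.subset (by simp))
          have hb' := hmem b (hl'.subset (by simp))
          have he' := hmem e (hl'.subset (by simp))
          exact ⟨a, b, e, hl', by omega, by omega⟩
        · exact absurd heq (by simp)
      · show ((map (fun x => x - d) L').map (· + d)) = L'
        rw [List.map_map]
        have hcong : ∀ w ∈ L', ((fun x => x + d) ∘ fun x => x - d) w = w := by
          intro w hw
          have := (List.mem_range'_1.mp (hp.subset hw)).1
          simp
          omega
        rw [List.map_congr_left hcong]
        exact List.map_id' L'
    · rintro ⟨L, ⟨hp, ha⟩, rfl⟩
      refine ⟨by rw [hr]; exact hp.map _, fun hc => ha ((containsPat_map_add d L).mp hc)⟩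
  rw [himg, Set.ncard_image_of_injective _ (List.map_injective_iff.mpr (fun a b hab => by omega))]
lemma sum_shift (g : ℕ → ℕ) (m : ℕ) : ∀ K, m ≤ K →
    ∑ k ∈ Finset.range K, (if m ≤ k then g (k - m) else 0)
      = ∑ j ∈ Finset.range (K - m), g j := by
  intro K
  induction K with
  | zero => intro h; simp
  | succ K ih =>
    intro h
    rcases Nat.lt_or_ge K m with h' | h'
    · have hm : m = K + 1 := by omega
      subst hm
      rw [Finset.sum_range_succ, if_neg (by omega), add_zero, Nat.sub_self,
        Finset.sum_range_zero]
      apply Finset.sum_eq_zero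
      intro k hk
      rw [if_neg]
      rw [Finset.mem_range] at hk
      omega
    · rw [Finset.sum_range_succ, ih h', if_pos (by omega),
        show K + 1 - m = (K - m) + 1 by omega, Finset.sum_range_succ]

lemma card_A132_rec_aux (n k : ℕ) (hn : 1 ≤ n) :
    (A132 n k).ncard =
      ∑ m ∈ Finset.range n,
        if m ≤ k then (Avp 1 m).ncard * (A132 (n - 1 - m) (k - m)).ncard else 0 := by
  classical
  set T : ℕ → Set (List ℕ) := fun m => {l | l ∈ A132 n k ∧ m < l.length ∧ l.getD m 0 = n}
    with hT
  have hTfin : ∀ m, (T m).Finite := fun m =>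
    (finite_perm (List.range' 1 n)).subset (fun l hl => hl.1.1)
  have hcover : A132 n k = ⋃ m ∈ Finset.range n, T m := by
    ext l
    simp only [hT, Set.mem_iUnion, Finset.mem_range, exists_prop, Set.mem_setOf_eq]
    constructor
    · intro hl
      have hperm : l.Perm (List.range' 1 n) := hl.1
      have hlen : l.length = n := by rw [hperm.length_eq, List.length_range']
      have hnl : n ∈ l := hperm.mem_iff.mpr (List.mem_range'_1.mpr ⟨hn, by omega⟩)
      obtain ⟨m, hm, hml⟩ := List.getElem_of_mem hnl
      exact ⟨m, by omega, hl, by omega, by rw [List.getD_eq_getElem _ _ hm]; exact hml⟩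
    · rintro ⟨m, _, hl, _, _⟩
      exact hl
  have hdisj : ∀ i ∈ Finset.range n, ∀ j ∈ Finset.range n, i ≠ j → Disjoint (T i) (T j) := by
    intro i _ j _ hij
    rw [Set.disjoint_left]
    rintro l ⟨hl, hi, hgi⟩ ⟨_, hj, hgj⟩
    have hnd : l.Nodup := (hl.1 : l.Perm _).nodup_iff.mpr List.nodup_range'
    apply hij
    rw [List.getD_eq_getElem _ _ hi] at hgi
    rw [List.getD_eq_getElem _ _ hj] at hgj
    exact (List.Nodup.getElem_inj_iff hnd).mp (by rw [hgi, hgj])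
  rw [hcover, my_ncard_biUnion _ _ (fun m _ => hTfin m) hdisj]
  apply Finset.sum_congr rfl
  intro m hm
  rw [Finset.mem_range] at hm
  have hbij := bijOn_split n m k hn hm
  have himg : T m = (fun p : List ℕ × List ℕ => p.1 ++ n :: p.2) ''
      ((Avp (n - m) m) ×ˢ {R | R ∈ Avp 1 (n - 1 - m) ∧ m + shortCount R = k}) :=
    hbij.image_eq.symm
  rw [himg, Set.ncard_image_of_injOn hbij.injOn, my_ncard_prod]
  have h1 : (Avp (n - m) m).ncard = (Avp 1 m).ncard := by
    rw [show n - m = 1 + (n - m - 1) by omega, avp_shift]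
  rw [h1]
  by_cases hmk : m ≤ k
  · rw [if_pos hmk]
    have h2 : {R | R ∈ Avp 1 (n - 1 - m) ∧ m + shortCount R = k} = A132 (n - 1 - m) (k - m) := by
      ext R
      simp only [A132, Avp, IsPermList, Set.mem_setOf_eq]
      constructor
      · rintro ⟨⟨hp, ha⟩, hsc⟩
        exact ⟨hp, ha, by omega⟩
      · rintro ⟨hp, ha, hsc⟩
        exact ⟨⟨hp, ha⟩, by omega⟩
    rw [h2]
  · rw [if_neg hmk]
    have h2 : {R | R ∈ Avp 1 (n - 1 - m) ∧ m + shortCount R = k} = ∅ := by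
      ext R
      simp only [Set.mem_setOf_eq, Set.mem_empty_iff_false, iff_false, not_and]
      intro _
      omega
    rw [h2, Set.ncard_empty, mul_zero]
lemma card_avp_sum (n : ℕ) :
    (Avp 1 n).ncard = ∑ k ∈ Finset.range (n + 1), (A132 n k).ncard := by
  have hcover : Avp 1 n = ⋃ k ∈ Finset.range (n + 1), A132 n k := by
    ext l
    simp only [Set.mem_iUnion, Finset.mem_range, exists_prop, Avp, A132, IsPermList,
      Set.mem_setOf_eq]
    constructor
    · rintro ⟨hp, ha⟩
      refine ⟨shortCount l, ?_, hp, ha, rfl⟩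
      have h1 := shortCount_le l
      have h2 : l.length = n := by rw [hp.length_eq, List.length_range']
      omega
    · rintro ⟨k, _, hp, ha, _⟩
      exact ⟨hp, ha⟩
  rw [hcover, my_ncard_biUnion]
  · intro k _
    exact (finite_perm _).subset (fun l hl => hl.1)
  · intro i _ j _ hij
    rw [Set.disjoint_left]
    rintro l ⟨_, _, hi⟩ ⟨_, _, hj⟩
    exact hij (by rw [← hi, ← hj])
lemma card_avp_catalan (n : ℕ) : (Avp 1 n).ncard = catalan n := by
  induction n using Nat.strong_induction_on with
  | _ n ih =>
    match n, ih with
    | 0, _ =>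
      have h : Avp 1 0 = {[]} := by
        ext l
        simp only [Avp, Set.mem_setOf_eq, List.range'_zero, Set.mem_singleton_iff]
        constructor
        · rintro ⟨hp, _⟩
          exact List.perm_nil.mp hp
        · rintro rfl
          refine ⟨List.Perm.refl _, ?_⟩
          rintro ⟨s, hs, hlen, _⟩
          have h1 := hs.length_le
          simp only [List.length_nil, Nat.le_zero] at h1
          simp at hlen
          omega
      rw [h, Set.ncard_singleton, catalan_zero]
    | N + 1, ih =>
      rw [card_avp_sum]
      have hterm : ∀ k, (A132 (N + 1) k).ncard = ∑ m ∈ Finset.range (N + 1),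
          if m ≤ k then (Avp 1 m).ncard * (A132 (N - m) (k - m)).ncard else 0 := by
        intro k
        have h := card_A132_rec_aux (N + 1) k (by omega)
        simpa using h
      rw [Finset.sum_congr rfl (fun k _ => hterm k), Finset.sum_comm]
      have hinner : ∀ m ∈ Finset.range (N + 1),
          (∑ k ∈ Finset.range (N + 1 + 1),
            if m ≤ k then (Avp 1 m).ncard * (A132 (N - m) (k - m)).ncard else 0)
            = catalan m * catalan (N - m) := by
        intro m hm
        rw [Finset.mem_range] at hm
        have hsplit : ∀ k, (if m ≤ k then (Avp 1 m).ncard * (A132 (N - m) (k - m)).ncard else 0)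
            = (Avp 1 m).ncard * (if m ≤ k then (A132 (N - m) (k - m)).ncard else 0) := by
          intro k
          split_ifs <;> simp
        rw [Finset.sum_congr rfl (fun k _ => hsplit k), ← Finset.mul_sum,
          sum_shift (fun j => (A132 (N - m) j).ncard) m (N + 1 + 1) (by omega),
          show N + 1 + 1 - m = (N - m + 1) + 1 by omega,
          Finset.sum_range_succ, A132_empty (by omega), Set.ncard_empty, add_zero,
          ← card_avp_sum, ih m (by omega), ih (N - m) (by omega)]
      rw [Finset.sum_congr rfl hinner, catalan_succ]
      exact (Fin.sum_univ_eq_sum_range (fun i => catalan i * catalan (N - i)) (N + 1)).symm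
/-- Recurrence for `|A(n,k)|` obtained by splitting a 132-avoiding permutation at its
maximum entry: `|A(n,k)| = Σ_{m=0}^{n-1} C_m * |A(n-1-m, k-m)|`, where terms with `m > k`
vanish (the convention `|A(a,b)| = 0` for `b < 0`). -/
theorem card_A132_rec (n k : ℕ) (hn : 1 ≤ n) :
    (A132 n k).ncard =
      ∑ m ∈ Finset.range n,
        if m ≤ k then catalan m * (A132 (n - 1 - m) (k - m)).ncard else 0 := by
  rw [card_A132_rec_aux n k hn]
  exact Finset.sum_congr rfl fun m _ => by rw [card_avp_catalan]
end

section
/- Let π be a 132-avoiding permutation of length n and let 0 ≤ i ≤ n. The permutation of length n+1 obtained by inserting the value n+1 immediately after the first i entries of π avoids 132 if and only if i = 0 or the entry π_i is a right-to-left maximum of π. -/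
open List

attribute [local instance] Classical.propDecidable

lemma orderIso132_iff (x y z : ℕ) :
    OrderIsoList [x, y, z] [1, 3, 2] ↔ (x < y ∧ x < z ∧ ¬ y < z) := by
  constructor
  · rintro ⟨-, hcond⟩
    refine ⟨?_, ?_, ?_⟩
    · have := hcond 0 1 (by norm_num) (by norm_num)
      simpa [List.getD] using this
    · have := hcond 0 2 (by norm_num) (by norm_num)
      simpa [List.getD] using this
    · have := hcond 1 2 (by norm_num) (by norm_num)
      simp [List.getD] at this
      omega
  · rintro ⟨h1, h2, h3⟩
    refine ⟨rfl, ?_⟩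
    intro a b hab hb
    simp only [List.length_cons, List.length_nil] at hb
    interval_cases b <;> interval_cases a <;> simp [List.getD] <;> omega

/-- Inserting the new maximum after the first `i` entries of a 132-avoiding permutation
yields a 132-avoiding permutation iff `i = 0` or the `i`-th entry (the entry at 0-indexed
position `i - 1`) is a right-to-left maximum. -/
theorem insertMax_avoids_iff (n : ℕ) (π : List ℕ)
    (h : IsPermList n π) (ha : AvoidsPat π [1, 3, 2]) (i : ℕ) (hi : i ≤ n) :
    AvoidsPat (insertMax π i) [1, 3, 2] ↔ i = 0 ∨ IsRLMax π (i - 1) := by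
  have hlen : π.length = n := by simpa using h.length_eq
  have hmem : ∀ x ∈ π, x ≤ n := by
    intro x hx
    have := h.mem_iff.mp hx
    rw [List.mem_range'_1] at this
    omega
  have hnd : π.Nodup := h.nodup_iff.mpr (List.nodup_range' (s := 1) (n := n))
  have hins : insertMax π i = π.take i ++ (n + 1) :: π.drop i := by
    rw [insertMax, hlen]
  constructor
  · -- forward: avoidance implies i = 0 ∨ RL max
    intro hav
    by_contra hcon
    push_neg at hcon
    obtain ⟨hi0, hrl⟩ := hcon
    have hi1 : 1 ≤ i := Nat.pos_of_ne_zero hi0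
    rw [IsRLMax] at hrl
    push_neg at hrl
    obtain ⟨j, hj1, hj2, hj3⟩ := hrl
    rw [hlen] at hj2
    have hi1n : i - 1 < π.length := by omega
    have hjn : j < π.length := by omega
    rw [List.getD_eq_getElem π 0 hjn, List.getD_eq_getElem π 0 hi1n] at hj3
    have hne : π[j] ≠ π[i-1] := by
      intro heq
      have := hnd.getElem_inj_iff.mp heq
      omega
    have hlt : π[i-1] < π[j] := by omega
    apply hav
    refine ⟨[π[i-1], n+1, π[j]], ?_, ?_⟩
    · rw [hins]
      have h1 : [π[i-1]].Sublist (π.take i) := by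
        rw [List.singleton_sublist]
        have hil : i - 1 < (π.take i).length := by
          rw [List.length_take]; omega
        have : (π.take i)[i-1] = π[i-1] := List.getElem_take (xs := π)
        rw [← this]
        exact List.getElem_mem hil
      have h2 : [π[j]].Sublist (π.drop i) := by
        rw [List.singleton_sublist]
        have hjl : j - i < (π.drop i).length := by
          rw [List.length_drop]; omega
        have : (π.drop i)[j-i] = π[i + (j - i)] := List.getElem_drop (xs := π)
        have hij : i + (j - i) = j := by omega
        rw [List.mem_iff_getElem]
        exact ⟨j - i, hjl, by simp [this, hij]⟩
      exact List.Sublist.append h1 (List.Sublist.cons₂ _ h2)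
    · rw [orderIso132_iff]
      have : π[j] ≤ n := hmem _ (List.getElem_mem hjn)
      omega
  · -- backward
    intro hcase hcon
    obtain ⟨s, hsub, hiso⟩ := hcon
    have hslen : s.length = 3 := hiso.1
    rw [hins, List.sublist_append_iff] at hsub
    obtain ⟨s1, s2, hseq, hsub1, hsub2⟩ := hsub
    rw [List.sublist_cons_iff] at hsub2
    rcases hsub2 with hsub2 | ⟨s2', hs2eq, hsub2'⟩
    · -- s avoids the new max: sublist of π
      exact ha ⟨s, by rw [hseq, ← List.take_append_drop i π]
                      exact List.Sublist.append hsub1 hsub2, hiso⟩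
    · subst hs2eq
      subst hseq
      have hlen1 : s1.length + 1 + s2'.length = 3 := by
        have := hslen; simp at this; omega
      have htakemem : ∀ x ∈ s1, x ≤ n := fun x hx =>
        hmem x (List.mem_of_mem_take (hsub1.mem hx))
      have hdropmem : ∀ x ∈ s2', x ≤ n := fun x hx =>
        hmem x (List.mem_of_mem_drop (hsub2'.mem hx))
      have hd : (s1 = [] ∧ ∃ b c, s2' = [b, c]) ∨ (∃ a, s1 = [a] ∧ ∃ c, s2' = [c])
          ∨ ((∃ a b, s1 = [a, b]) ∧ s2' = []) := by
        have h1 : s1.length = 0 ∨ s1.length = 1 ∨ s1.length = 2 := by omega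
        rcases h1 with h1 | h1 | h1
        · exact Or.inl ⟨List.length_eq_zero_iff.mp h1,
            List.length_eq_two.mp (by omega)⟩
        · refine Or.inr (Or.inl ?_)
          obtain ⟨a, hax⟩ := List.length_eq_one_iff.mp h1
          exact ⟨a, hax, List.length_eq_one_iff.mp (by omega)⟩
        · exact Or.inr (Or.inr ⟨List.length_eq_two.mp h1,
            List.length_eq_zero_iff.mp (by omega)⟩)
      rcases hd with ⟨h1, b, c, h2⟩ | ⟨a, h1, c, h2⟩ | ⟨⟨a, b, h1⟩, h2⟩ <;>
        subst h1 <;> subst h2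
      ·
        -- s = [n+1, b, c], need n+1 < b, impossible
        rw [List.nil_append, orderIso132_iff] at hiso
        have : b ≤ n := hdropmem b (by simp)
        omega
      ·
        -- s = [a, n+1, c], main case
        have hiso' : OrderIsoList [a, n+1, c] [1,3,2] := hiso
        rw [orderIso132_iff] at hiso'
        obtain ⟨-, hac, -⟩ := hiso'
        have hamem : a ∈ π.take i := by
          rw [← List.singleton_sublist]; exact hsub1
        have hcmem : c ∈ π.drop i := by
          rw [← List.singleton_sublist]; exact hsub2'
        have hi1 : 1 ≤ i := by
          rcases Nat.eq_zero_or_pos i with h0 | h0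
          · subst h0; simp at hamem
          · exact h0
        have hrl : IsRLMax π (i - 1) := by
          rcases hcase with h0 | hrl
          · omega
          · exact hrl
        have hi1n : i - 1 < π.length := by omega
        -- c = π[i+k] for some k, so c < π[i-1]
        obtain ⟨k, hk, hck⟩ := List.mem_iff_getElem.mp hcmem
        rw [List.length_drop] at hk
        have hkk : i + k < π.length := by omega
        have hc : c = π[i+k] := by
          rw [← hck]; exact (List.getElem_drop (xs := π)).symm ▸ rfl
        have hclt : c < π[i-1] := by
          have := hrl (i + k) (by omega) (by rw [hlen]; omega)
          rw [List.getD_eq_getElem π 0 hkk, List.getD_eq_getElem π 0 hi1n] at this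
          omega
        -- a ∈ take (i-1)
        have hane : a ≠ π[i-1] := by omega
        have htake : π.take i = π.take (i-1) ++ [π[i-1]] := by
          conv_lhs => rw [show i = (i-1) + 1 by omega]
          rw [List.take_succ, List.getElem?_eq_getElem hi1n]
          rfl
        have hamem' : a ∈ π.take (i-1) := by
          rw [htake, List.mem_append] at hamem
          rcases hamem with h' | h'
          · exact h'
          · simp at h'; omega
        -- build 132 pattern in π
        apply ha
        refine ⟨[a, π[i-1], c], ?_, ?_⟩
        · have : ([a] ++ π[i-1] :: [c]).Sublist
              (π.take (i-1) ++ π[i-1] :: π.drop i) :=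
            List.Sublist.append (List.singleton_sublist.mpr hamem')
              (List.Sublist.cons₂ _ (List.singleton_sublist.mpr hcmem))
          have hπeq : π.take (i-1) ++ π[i-1] :: π.drop i = π := by
            have h' := List.take_append_drop i π
            rw [htake] at h'
            simp only [List.append_assoc, List.singleton_append] at h'
            exact h'
          rw [hπeq] at this
          exact this
        · rw [orderIso132_iff]
          exact ⟨by omega, hac, by omega⟩
      ·
        -- s = [a, b, n+1], need ¬ b < n+1, impossible
        have hiso' : OrderIsoList [a, b, n+1] [1,3,2] := hiso
        rw [orderIso132_iff] at hiso'
        have : b ≤ n := htakemem b (by simp)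
        omega
end

section
/- For n ≥ 2 and 0 ≤ r ≤ n−1, the map sending a permutation π' ∈ A(n−1, r) to the permutation of length n obtained by increasing every entry of π' by one and appending the entry 1 at the end is a bijection from A(n−1, r) onto the set of permutations in A(n, r) whose last entry is 1. In particular, the number of 132-avoiding permutations of length n with exactly r short values and last entry equal to 1 is |A(n−1, r)|. -/
open List

attribute [local instance] Classical.propDecidable

lemma getD_map_lt (f : ℕ → ℕ) (l : List ℕ) (i : ℕ) (h : i < l.length) :
    (l.map f).getD i 0 = f (l.getD i 0) := by
  rw [List.getD_eq_getElem _ _ (by simpa using h), List.getD_eq_getElem _ _ h,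
    List.getElem_map]

lemma orderIso_map_succ (t p : List ℕ) :
    OrderIsoList (t.map (· + 1)) p ↔ OrderIsoList t p := by
  unfold OrderIsoList
  simp only [List.length_map]
  constructor <;> rintro ⟨hlen, h⟩ <;> refine ⟨hlen, fun i j hij hj => ?_⟩ <;>
    have hi : i < t.length := lt_trans hij hj <;>
    have := h i j hij hj <;>
    rw [getD_map_lt _ _ _ hi, getD_map_lt _ _ _ hj] at * <;>
    simpa using this

lemma containsPat_map_succ (l p : List ℕ) :
    ContainsPat (l.map (· + 1)) p ↔ ContainsPat l p := by
  constructor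
  · rintro ⟨s, hs, hiso⟩
    obtain ⟨t, ht, rfl⟩ := List.sublist_map_iff.mp hs
    exact ⟨t, ht, (orderIso_map_succ t p).mp hiso⟩
  · rintro ⟨t, ht, hiso⟩
    exact ⟨t.map (· + 1), ht.map _, (orderIso_map_succ t p).mpr hiso⟩

lemma containsPat_append_one (m : List ℕ) (hm : ∀ x ∈ m, 2 ≤ x) :
    ContainsPat (m ++ [1]) [1, 3, 2] ↔ ContainsPat m [1, 3, 2] := by
  constructor
  · rintro ⟨s, hs, hiso⟩
    obtain ⟨s1, s2, rfl, hs1, hs2⟩ := List.sublist_append_iff.mp hs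
    rcases List.sublist_singleton.mp hs2 with rfl | rfl
    · exact ⟨s1, by simpa using hs1, by simpa using hiso⟩
    · exfalso
      have hlen : s1.length = 2 := by have := hiso.1; simp at this; omega
      obtain ⟨a, b, rfl⟩ := List.length_eq_two.mp hlen
      have h02 := (hiso.2 0 2 (by norm_num) (by simp)).mpr (by simp [List.getD])
      simp [List.getD] at h02
      have ha : a ∈ m := hs1.subset (by simp)
      have := hm a ha
      omega
  · rintro ⟨s, hs, hiso⟩
    exact ⟨s, hs.trans (List.sublist_append_left _ _), hiso⟩

lemma isRLMax_map_succ (l : List ℕ) (i : ℕ) (hi : i < l.length) :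
    IsRLMax (l.map (· + 1)) i ↔ IsRLMax l i := by
  unfold IsRLMax
  simp only [List.length_map]
  constructor <;> intro h j hij hj <;> have := h j hij hj <;>
    rw [getD_map_lt _ _ _ hi, getD_map_lt _ _ _ hj] at * <;> omega

lemma shortCount_map_succ (l : List ℕ) :
    shortCount (l.map (· + 1)) = shortCount l := by
  unfold shortCount
  congr 1
  ext i
  simp only [Set.mem_setOf_eq, List.length_map]
  constructor <;> rintro ⟨h1, h2⟩ <;> exact ⟨h1, fun h => h2 (by
    rw [isRLMax_map_succ l i h1] at *; assumption)⟩

lemma isRLMax_append_one (m : List ℕ) (hm : ∀ x ∈ m, 2 ≤ x) (i : ℕ) (hi : i < m.length) :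
    IsRLMax (m ++ [1]) i ↔ IsRLMax m i := by
  constructor
  · intro h j hij hj
    have := h j hij (by simp; omega)
    rwa [List.getD_append _ _ _ _ hj, List.getD_append _ _ _ _ hi] at this
  · intro h j hij hj
    simp only [List.length_append, List.length_singleton] at hj
    rw [List.getD_append _ _ _ _ hi]
    rcases lt_or_ge j m.length with hjl | hjl
    · rw [List.getD_append _ _ _ _ hjl]; exact h j hij hjl
    · have hje : j = m.length := by omega
      rw [List.getD_append_right _ _ _ _ hjl, hje]
      simp only [Nat.sub_self]
      have : m.getD i 0 ∈ m := by
        rw [List.getD_eq_getElem _ _ hi]; exact List.getElem_mem _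
      have h2m := hm _ this
      show (1:ℕ) < m.getD i 0
      omega
lemma shortCount_append_one (m : List ℕ) (hm : ∀ x ∈ m, 2 ≤ x) :
    shortCount (m ++ [1]) = shortCount m := by
  unfold shortCount
  congr 1
  ext i
  simp only [Set.mem_setOf_eq, List.length_append, List.length_singleton]
  constructor
  · rintro ⟨h1, h2⟩
    rcases lt_or_ge i m.length with hi | hi
    · exact ⟨hi, fun h => h2 ((isRLMax_append_one m hm i hi).mpr h)⟩
    · exfalso
      exact h2 (fun j hij hj => by simp at hj; omega)
  · rintro ⟨h1, h2⟩
    exact ⟨by omega, fun h => h2 ((isRLMax_append_one m hm i h1).mp h)⟩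

lemma map_succ_range' (k : ℕ) : (List.range' 1 k).map (· + 1) = List.range' 2 k := by
  rw [List.range'_eq_map_range, List.range'_eq_map_range, List.map_map]
  exact List.map_congr_left fun x _ => by simp only [Function.comp_apply]; omega

lemma map_pred_range' (k : ℕ) : (List.range' 2 k).map (· - 1) = List.range' 1 k := by
  rw [List.range'_eq_map_range, List.range'_eq_map_range, List.map_map]
  exact List.map_congr_left fun x _ => by simp only [Function.comp_apply]; omega

lemma range'_one_eq (n : ℕ) (hn : 1 ≤ n) :
    List.range' 1 n = 1 :: List.range' 2 (n - 1) := by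
  rw [show n = (n - 1) + 1 by omega]
  rfl


/-- For `n ≥ 2` and `0 ≤ r ≤ n-1`, the map sending `π' ∈ A(n-1, r)` to the permutation
obtained by increasing every entry by one and appending the entry `1` at the end is a
bijection onto the set of permutations in `A(n, r)` whose last entry is `1`; in particular
that set has cardinality `|A(n-1, r)|`. -/
theorem bijOn_append_one (n r : ℕ) (hn : 2 ≤ n) (hr : r ≤ n - 1) :
    Set.BijOn (fun l : List ℕ => (l.map (· + 1)) ++ [1]) (A132 (n - 1) r)
      {l | l ∈ A132 n r ∧ l.getLast? = some 1} ∧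
    {l | l ∈ A132 n r ∧ l.getLast? = some 1}.ncard = (A132 (n - 1) r).ncard := by
  have hbij : Set.BijOn (fun l : List ℕ => (l.map (· + 1)) ++ [1]) (A132 (n - 1) r)
      {l | l ∈ A132 n r ∧ l.getLast? = some 1} := by
    refine ⟨?_, ?_, ?_⟩
    · -- MapsTo
      rintro l ⟨hperm, havoid, hshort⟩
      have hpm : (l.map (· + 1)).Perm (List.range' 2 (n - 1)) := by
        have := hperm.map (· + 1)
        rwa [map_succ_range'] at this
      have hm2 : ∀ x ∈ l.map (· + 1), 2 ≤ x := fun x hx =>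
        (List.mem_range'_1.mp (hpm.subset hx)).1
      refine ⟨⟨?_, ?_, ?_⟩, List.getLast?_concat⟩
      · unfold IsPermList
        rw [range'_one_eq n (by omega)]
        exact (hpm.append_right [1]).trans (List.perm_append_singleton 1 _)
      · intro hc
        rw [containsPat_append_one _ hm2, containsPat_map_succ] at hc
        exact havoid hc
      · rw [shortCount_append_one _ hm2, shortCount_map_succ]
        exact hshort
    · -- InjOn
      intro l _ l' _ h
      simp only at h
      have := List.append_cancel_right h
      exact List.map_injective_iff.mpr (fun a b hab => by omega) this
    · -- SurjOn
      rintro m ⟨⟨hperm, havoid, hshort⟩, hlast⟩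
      have hne : m ≠ [] := by rintro rfl; simp at hlast
      have hgl : m.getLast hne = 1 := by
        rw [List.getLast?_eq_getLast hne] at hlast
        exact Option.some_injective _ hlast
      have hsplit : m.dropLast ++ [1] = m := by
        rw [← hgl]; exact List.dropLast_append_getLast hne
      set m' := m.dropLast with hm'
      have hperm' : m'.Perm (List.range' 2 (n - 1)) := by
        have h1 : (m' ++ [1]).Perm (1 :: List.range' 2 (n - 1)) := by
          rw [hsplit, ← range'_one_eq n (by omega)]; exact hperm
        have h2 : (1 :: m').Perm (1 :: List.range' 2 (n - 1)) :=
          (List.perm_append_singleton 1 m').symm.trans h1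
        exact h2.cons_inv
      have hm2 : ∀ x ∈ m', 2 ≤ x := fun x hx =>
        (List.mem_range'_1.mp (hperm'.subset hx)).1
      refine ⟨m'.map (· - 1), ⟨?_, ?_, ?_⟩, ?_⟩
      · unfold IsPermList
        have := hperm'.map (· - 1)
        rwa [map_pred_range'] at this
      · intro hc
        apply havoid
        have hmap : (m'.map (· - 1)).map (· + 1) = m' := by
          rw [List.map_map]
          rw [List.map_congr_left (fun x hx => by
            simp only [Function.comp_apply, id]
            have := hm2 x hx
            omega : ∀ x ∈ m', ((· + 1) ∘ (· - 1)) x = id x), List.map_id]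
        rw [← hsplit, containsPat_append_one _ hm2, ← hmap, containsPat_map_succ]
        exact hc
      · have hmap : (m'.map (· - 1)).map (· + 1) = m' := by
          rw [List.map_map]
          rw [List.map_congr_left (fun x hx => by
            simp only [Function.comp_apply, id]
            have := hm2 x hx
            omega : ∀ x ∈ m', ((· + 1) ∘ (· - 1)) x = id x), List.map_id]
        rw [← hsplit, shortCount_append_one _ hm2, ← hmap, shortCount_map_succ] at hshort
        exact hshort
      · have hmap : (m'.map (· - 1)).map (· + 1) = m' := by
          rw [List.map_map]
          rw [List.map_congr_left (fun x hx => by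
            simp only [Function.comp_apply, id]
            have := hm2 x hx
            omega : ∀ x ∈ m', ((· + 1) ∘ (· - 1)) x = id x), List.map_id]
        simp only
        rw [hmap, hsplit]
  refine ⟨hbij, ?_⟩
  rw [← hbij.image_eq, Set.ncard_image_of_injOn hbij.injOn]
end
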